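/- arXiv:1106.5439 — 10 statements merged into one kernel-verified Lean document; each statement's English description precedes it below -/
import Mathlib

section
/- Let N ≥ 1 and let φ be a Laurent polynomial containing only negative powers z^{-1},...,z^{-N}, and let α, β be polynomials of degree at most N in z (nonnegative powers). If the 2×2 matrix product [[1,0],[φ,1]]·[[α,β],[-β̃,α̃]] has all entries that are polynomials in nonnegative powers of z (where p̃(z) denotes the conjugate-reflected polynomial Σ c̄_k z^{-k} for p(z)=Σ c_k z^k), then α(z)α̃(z) + β(z)β̃(z) is a constant function on ℂ\{0}. -/
open Complex Finset Matrix

/-- Evaluation of the polynomial `∑_{k=0}^N a_k z^k` (element of `P⁺_N`). -/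
noncomputable def pEval {N : ℕ} (a : Fin (N + 1) → ℂ) (z : ℂ) : ℂ :=
  ∑ k : Fin (N + 1), a k * z ^ (k : ℕ)

/-- Evaluation of `p̃(z) = ∑_{k=0}^N conj(a_k) z^{-k}`. -/
noncomputable def pTilde {N : ℕ} (a : Fin (N + 1) → ℂ) (z : ℂ) : ℂ :=
  ∑ k : Fin (N + 1), (starRingEnd ℂ) (a k) * z⁻¹ ^ (k : ℕ)

/-- Evaluation of `φ(z) = ∑_{k=1}^N γ_k z^{-k}` (element of `P⁻_N`). -/
noncomputable def nEval {N : ℕ} (g : Fin N → ℂ) (z : ℂ) : ℂ :=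
  ∑ k : Fin N, g k * z⁻¹ ^ ((k : ℕ) + 1)

/-- A function on `ℂ \ {0}` that coincides with a polynomial in nonnegative powers of `z`. -/
def IsPolyFun (f : ℂ → ℂ) : Prop :=
  ∃ p : Polynomial ℂ, ∀ z : ℂ, z ≠ 0 → f z = p.eval z

lemma conj_poly_eval (p : Polynomial ℂ) (x : ℂ) :
    (starRingEnd ℂ) (p.eval x) = (p.map (starRingEnd ℂ)).eval ((starRingEnd ℂ) x) := by
  rw [Polynomial.eval_map, Polynomial.eval, Polynomial.hom_eval₂]; rfl

lemma natDegree_reflect_le (N : ℕ) (f : Polynomial ℂ) (hf : f.natDegree ≤ N) :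
    (Polynomial.reflect N f).natDegree ≤ N := by
  apply Polynomial.natDegree_le_iff_coeff_eq_zero.2
  intro i hi
  rw [Polynomial.coeff_reflect, Polynomial.revAt_eq_self_of_lt hi]
  exact Polynomial.coeff_eq_zero_of_natDegree_lt (lt_of_le_of_lt hf hi)

lemma pEval_conj_inv {N : ℕ} (c : Fin (N + 1) → ℂ) (z : ℂ) :
    pEval c ((starRingEnd ℂ) z)⁻¹ = (starRingEnd ℂ) (pTilde c z) := by
  simp [pEval, pTilde, map_sum, _root_.map_mul, map_pow, map_inv₀]

lemma pTilde_conj_inv {N : ℕ} (c : Fin (N + 1) → ℂ) (z : ℂ) :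
    pTilde c ((starRingEnd ℂ) z)⁻¹ = (starRingEnd ℂ) (pEval c z) := by
  simp [pEval, pTilde, map_sum, _root_.map_mul, map_pow, inv_inv]

/-- Lemma 1: if all entries of `[[1,0],[φ,1]]·[[α,β],[-β̃,α̃]]` contain only nonnegative
powers of `z`, then `α α̃ + β β̃` is constant on `ℂ \ {0}`. -/
theorem daubechies_lemma1 (N : ℕ) (hN : 1 ≤ N) (g : Fin N → ℂ)
    (a b : Fin (N + 1) → ℂ)
    (h : ∀ i j : Fin 2, IsPolyFun (fun z =>
      ((!![(1 : ℂ), 0; nEval g z, 1] : Matrix (Fin 2) (Fin 2) ℂ) *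
        !![pEval a z, pEval b z; -pTilde b z, pTilde a z]) i j)) :
    ∃ c : ℂ, ∀ z : ℂ, z ≠ 0 →
      pEval a z * pTilde a z + pEval b z * pTilde b z = c := by
  classical
  set F : ℂ → ℂ := fun z => pEval a z * pTilde a z + pEval b z * pTilde b z with hF
  obtain ⟨p10, h10⟩ := h 1 0
  obtain ⟨p11, h11⟩ := h 1 1
  have h10' : ∀ z : ℂ, z ≠ 0 →
      nEval g z * pEval a z - pTilde b z = p10.eval z := by
    intro z hz
    have := h10 z hz
    simpa [Matrix.mul_apply, Fin.sum_univ_two, sub_eq_add_neg] using this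
  have h11' : ∀ z : ℂ, z ≠ 0 →
      nEval g z * pEval b z + pTilde a z = p11.eval z := by
    intro z hz
    have := h11 z hz
    simpa [Matrix.mul_apply, Fin.sum_univ_two] using this
  -- polynomials for pEval a, pEval b
  set pA : Polynomial ℂ := ∑ k : Fin (N + 1), Polynomial.C (a k) * Polynomial.X ^ (k : ℕ)
    with hpAdef
  set pB : Polynomial ℂ := ∑ k : Fin (N + 1), Polynomial.C (b k) * Polynomial.X ^ (k : ℕ)
    with hpBdef
  have hpA : ∀ z : ℂ, pA.eval z = pEval a z := by
    intro z; simp [hpAdef, pEval, Polynomial.eval_finset_sum]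
  have hpB : ∀ z : ℂ, pB.eval z = pEval b z := by
    intro z; simp [hpBdef, pEval, Polynomial.eval_finset_sum]
  set p : Polynomial ℂ := pA * p11 - pB * p10 with hpdef
  have key1 : ∀ z : ℂ, z ≠ 0 → F z = p.eval z := by
    intro z hz
    rw [hpdef]
    simp only [Polynomial.eval_sub, Polynomial.eval_mul, hpA, hpB,
      ← h10' z hz, ← h11' z hz, hF]
    ring
  -- symmetry: F((conj z)⁻¹) = conj (F z)
  have key2 : ∀ z : ℂ, z ≠ 0 →
      (p.map (starRingEnd ℂ)).eval z⁻¹ = p.eval z := by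
    intro z hz
    have hx : ((starRingEnd ℂ) ((starRingEnd ℂ) z)⁻¹) = z⁻¹ := by
      simp [map_inv₀]
    have h1 := conj_poly_eval p (((starRingEnd ℂ) z)⁻¹)
    rw [hx] at h1
    rw [← h1]
    have hz' : ((starRingEnd ℂ) z)⁻¹ ≠ 0 := by
      simp [hz]
    rw [← key1 _ hz']
    have : F (((starRingEnd ℂ) z)⁻¹) = (starRingEnd ℂ) (F z) := by
      simp only [hF, pEval_conj_inv, pTilde_conj_inv, map_add, _root_.map_mul]
      ring
    rw [this, key1 z hz]
    simp
  -- reflect argument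
  set d : ℕ := p.natDegree with hd
  set p' : Polynomial ℂ := p.map (starRingEnd ℂ) with hp'def
  have hp'deg : p'.natDegree ≤ d := Polynomial.natDegree_map_le
  set q : Polynomial ℂ := Polynomial.reflect d p' with hqdef
  have key3 : ∀ z : ℂ, z ≠ 0 → q.eval z = (Polynomial.X ^ d * p).eval z := by
    intro z hz
    letI : Invertible (z⁻¹) := invertibleOfNonzero (inv_ne_zero hz)
    have h1 := Polynomial.eval₂_reflect_mul_pow (RingHom.id ℂ) (z⁻¹) d p' hp'deg
    rw [invOf_eq_inv, inv_inv] at h1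
    have h2 : q.eval z * (z⁻¹) ^ d = p'.eval z⁻¹ := h1
    rw [key2 z hz] at h2
    rw [Polynomial.eval_mul, Polynomial.eval_pow, Polynomial.eval_X]
    calc q.eval z = q.eval z * ((z⁻¹) ^ d * z ^ d) := by
          rw [inv_pow, inv_mul_cancel₀ (pow_ne_zero d hz), mul_one]
      _ = q.eval z * (z⁻¹) ^ d * z ^ d := by ring
      _ = p.eval z * z ^ d := by rw [h2]
      _ = z ^ d * p.eval z := by ring
  have hqeq : q = Polynomial.X ^ d * p := by
    apply Polynomial.eq_of_infinite_eval_eq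
    apply Set.Infinite.mono (s := {(0 : ℂ)}ᶜ)
    · intro z hz
      exact key3 z hz
    · exact Set.Finite.infinite_compl (Set.finite_singleton 0)
  by_cases hp : p = 0
  · refine ⟨0, fun z hz => ?_⟩
    rw [show pEval a z * pTilde a z + pEval b z * pTilde b z = F z from rfl,
      key1 z hz, hp, Polynomial.eval_zero]
  · have hdeg : (Polynomial.X ^ d * p).natDegree = d + p.natDegree := by
      rw [Polynomial.natDegree_mul (pow_ne_zero d Polynomial.X_ne_zero) hp,
        Polynomial.natDegree_X_pow]
    have hqq : q.natDegree ≤ d := natDegree_reflect_le d p' hp'deg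
    rw [hqeq, hdeg] at hqq
    have hp0 : p.natDegree = 0 := by omega
    obtain ⟨c, hc⟩ := Polynomial.natDegree_eq_zero.mp hp0
    refine ⟨c, fun z hz => ?_⟩
    rw [show pEval a z * pTilde a z + pEval b z * pTilde b z = F z from rfl,
      key1 z hz, ← hc, Polynomial.eval_C]
end

section
/- Let N ≥ 1 and let φ ∈ P^-_N be a nonzero Laurent polynomial with only negative powers of z. Then there exists a unique pair of polynomials α, β ∈ P^+_N (nonnegative powers up to degree N) such that (i) α(z)α̃(z) + β(z)β̃(z) = 1 for all z ∈ ℂ\{0}, (ii) α(1) = 1 and β(1) = 0, and (iii) all entries of the matrix [[1,0],[φ,1]]·[[α,β],[-β̃,α̃]] are polynomials in nonnegative powers of z. -/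
open Complex Finset Matrix

open Polynomial

noncomputable def Apoly {N : ℕ} (a : Fin (N + 1) → ℂ) : Polynomial ℂ :=
  ∑ k : Fin (N + 1), Polynomial.monomial (k : ℕ) (a k)

noncomputable def Tpoly {N : ℕ} (a : Fin (N + 1) → ℂ) : Polynomial ℂ :=
  ∑ k : Fin (N + 1), Polynomial.monomial (N - (k : ℕ)) ((starRingEnd ℂ) (a k))

noncomputable def Npoly {N : ℕ} (g : Fin N → ℂ) : Polynomial ℂ :=
  ∑ m : Fin N, Polynomial.monomial (N - ((m : ℕ) + 1)) (g m)

lemma Apoly_eval {N : ℕ} (a : Fin (N + 1) → ℂ) (z : ℂ) : (Apoly a).eval z = pEval a z := by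
  simp [Apoly, pEval, eval_finset_sum]

lemma Tpoly_eval {N : ℕ} (a : Fin (N + 1) → ℂ) {z : ℂ} (hz : z ≠ 0) :
    (Tpoly a).eval z = z ^ N * pTilde a z := by
  simp only [Tpoly, pTilde, eval_finset_sum, eval_monomial, Finset.mul_sum]
  refine Finset.sum_congr rfl fun k _ => ?_
  rw [pow_sub₀ z hz (by omega : (k : ℕ) ≤ N), inv_pow]
  field_simp

lemma Npoly_eval {N : ℕ} (g : Fin N → ℂ) {z : ℂ} (hz : z ≠ 0) :
    (Npoly g).eval z = z ^ N * nEval g z := by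
  simp only [Npoly, nEval, eval_finset_sum, eval_monomial, Finset.mul_sum]
  refine Finset.sum_congr rfl fun k _ => ?_
  rw [pow_sub₀ z hz (by omega : (k : ℕ) + 1 ≤ N), inv_pow]
  field_simp

lemma Apoly_coeff {N : ℕ} (a : Fin (N + 1) → ℂ) (j : ℕ) :
    (Apoly a).coeff j = if h : j < N + 1 then a ⟨j, h⟩ else 0 := by
  rw [Apoly, finset_sum_coeff]
  simp only [coeff_monomial]
  split
  · next h =>
    rw [Finset.sum_eq_single (⟨j, h⟩ : Fin (N + 1))]
    · simp
    · intro k _ hk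
      exact if_neg fun hkj => hk (Fin.ext hkj)
    · simp
  · next h =>
    exact Finset.sum_eq_zero fun k _ => if_neg (fun hkj => h (by rw [← hkj]; exact k.isLt))

lemma Tpoly_coeff {N : ℕ} (a : Fin (N + 1) → ℂ) (j : ℕ) :
    (Tpoly a).coeff j =
      if h : j < N + 1 then (starRingEnd ℂ) (a ⟨N - j, by omega⟩) else 0 := by
  rw [Tpoly, finset_sum_coeff]
  simp only [coeff_monomial]
  split
  · next h =>
    rw [Finset.sum_eq_single (⟨N - j, by omega⟩ : Fin (N + 1))]
    · rw [if_pos (show N - ((N - j : ℕ)) = j by omega)]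
    · intro k _ hk
      refine if_neg fun hkj => hk (Fin.ext ?_)
      have := k.isLt; simp only; omega
    · simp
  · next h =>
    exact Finset.sum_eq_zero fun k _ => if_neg (by omega)

lemma Apoly_natDegree {N : ℕ} (a : Fin (N + 1) → ℂ) : (Apoly a).natDegree ≤ N :=
  natDegree_sum_le_of_forall_le _ _ fun k _ =>
    (natDegree_monomial_le _).trans (Nat.lt_succ_iff.mp k.isLt)

lemma Tpoly_natDegree {N : ℕ} (a : Fin (N + 1) → ℂ) : (Tpoly a).natDegree ≤ N :=
  natDegree_sum_le_of_forall_le _ _ fun k _ =>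
    (natDegree_monomial_le _).trans (Nat.sub_le _ _)

lemma Tpoly_eq_reflect {N : ℕ} (a : Fin (N + 1) → ℂ) :
    Tpoly a = reflect N ((Apoly a).map (starRingEnd ℂ)) := by
  ext j
  rw [Tpoly_coeff, coeff_reflect, coeff_map, Apoly_coeff]
  by_cases hj : j < N + 1
  · rw [dif_pos hj, revAt_le (by omega : j ≤ N), dif_pos (by omega : N - j < N + 1)]
  · rw [dif_neg hj]
    rw [revAt_eq_self_of_lt (by omega), dif_neg hj, map_zero]

lemma conj_conj_poly (p : Polynomial ℂ) :
    (p.map (starRingEnd ℂ)).map (starRingEnd ℂ) = p := by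
  ext j; simp [coeff_map]

lemma map_reflect' (p : Polynomial ℂ) (n : ℕ) :
    (reflect n p).map (starRingEnd ℂ) = reflect n (p.map (starRingEnd ℂ)) := by
  ext i; rw [coeff_map, coeff_reflect, coeff_reflect, coeff_map]

lemma reflect_reflect' (p : Polynomial ℂ) (n : ℕ) :
    reflect n (reflect n p) = p := by
  ext i; rw [coeff_reflect, coeff_reflect, revAt_invol]

lemma Q_sym {N : ℕ} (a b : Fin (N + 1) → ℂ) :
    (Apoly a * Tpoly a + Apoly b * Tpoly b).map (starRingEnd ℂ)
      = reflect (N + N) (Apoly a * Tpoly a + Apoly b * Tpoly b) := by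
  have hAs : ∀ c : Fin (N + 1) → ℂ,
      (Tpoly c).map (starRingEnd ℂ) = reflect N (Apoly c) := by
    intro c
    rw [Tpoly_eq_reflect, map_reflect', conj_conj_poly]
  have hrefl : ∀ c : Fin (N + 1) → ℂ,
      reflect N (Tpoly c) = (Apoly c).map (starRingEnd ℂ) := by
    intro c
    rw [Tpoly_eq_reflect, reflect_reflect']
  rw [Polynomial.map_add, Polynomial.map_mul, Polynomial.map_mul, reflect_add,
    reflect_mul (Apoly a) (Tpoly a) (Apoly_natDegree a) (Tpoly_natDegree a),
    reflect_mul (Apoly b) (Tpoly b) (Apoly_natDegree b) (Tpoly_natDegree b),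
    hAs, hAs, hrefl, hrefl]
  ring

lemma pTilde_one {N : ℕ} (a : Fin (N + 1) → ℂ) :
    pTilde a 1 = (starRingEnd ℂ) (pEval a 1) := by
  simp [pTilde, pEval, map_sum]

lemma key {N : ℕ} (g : Fin N → ℂ) (a b : Fin (N + 1) → ℂ)
    (h1 : IsPolyFun (fun z => nEval g z * pEval a z - pTilde b z))
    (h2 : IsPolyFun (fun z => nEval g z * pEval b z + pTilde a z)) :
    (∑ k : Fin (N + 1), (a k * (starRingEnd ℂ) (a k) + b k * (starRingEnd ℂ) (b k))) =
      pEval a 1 * (starRingEnd ℂ) (pEval a 1) + pEval b 1 * (starRingEnd ℂ) (pEval b 1) ∧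
    ∀ z : ℂ, z ≠ 0 → pEval a z * pTilde a z + pEval b z * pTilde b z =
      pEval a 1 * (starRingEnd ℂ) (pEval a 1) + pEval b 1 * (starRingEnd ℂ) (pEval b 1) := by
  obtain ⟨q1, hq1⟩ := h1
  obtain ⟨q2, hq2⟩ := h2
  set Q : Polynomial ℂ := Apoly a * Tpoly a + Apoly b * Tpoly b with hQdef
  have hQeval : ∀ z : ℂ, z ≠ 0 → Q.eval z =
      z ^ N * (pEval a z * pTilde a z + pEval b z * pTilde b z) := by
    intro z hz
    rw [hQdef, eval_add, eval_mul, eval_mul, Apoly_eval, Apoly_eval,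
      Tpoly_eval a hz, Tpoly_eval b hz]
    ring
  have hQ2 : Q = X ^ N * (Apoly a * q2 - Apoly b * q1) := by
    apply eq_of_infinite_eval_eq
    refine Set.Infinite.mono ?_ ((Set.finite_singleton (0:ℂ)).infinite_compl)
    intro z hz
    have hz' : z ≠ 0 := hz
    simp only [Set.mem_setOf_eq]
    rw [hQeval z hz', eval_mul, eval_pow, eval_X, eval_sub, eval_mul, eval_mul,
      Apoly_eval, Apoly_eval, ← hq1 z hz', ← hq2 z hz']
    ring
  have hlow : ∀ d, d < N → Q.coeff d = 0 :=
    X_pow_dvd_iff.mp ⟨_, hQ2⟩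
  have hdegQ : Q.natDegree ≤ N + N := by
    refine (natDegree_add_le _ _).trans (max_le ?_ ?_) <;>
      exact natDegree_mul_le.trans (add_le_add (Apoly_natDegree _) (Tpoly_natDegree _))
  have hhigh : ∀ d, N < d → Q.coeff d = 0 := by
    intro d hd
    rcases le_or_gt d (N + N) with h | h
    · have hc : (starRingEnd ℂ) (Q.coeff d) = Q.coeff (revAt (N + N) d) := by
        rw [← coeff_map, Q_sym, coeff_reflect]
      rw [revAt_le h] at hc
      rw [hlow (N + N - d) (by omega)] at hc
      have := congrArg (starRingEnd ℂ) hc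
      simpa using this
    · exact coeff_eq_zero_of_natDegree_lt (lt_of_le_of_lt hdegQ h)
  have hQm : Q = Polynomial.monomial N (Q.coeff N) := by
    ext d
    rw [coeff_monomial]
    rcases lt_trichotomy d N with h | h | h
    · rw [hlow d h, if_neg (by omega)]
    · rw [h, if_pos rfl]
    · rw [hhigh d h, if_neg (by omega)]
  have hab : ∀ c : Fin (N + 1) → ℂ, (Apoly c * Tpoly c).coeff N =
      ∑ k : Fin (N + 1), c k * (starRingEnd ℂ) (c k) := by
    intro c
    rw [coeff_mul, Finset.Nat.sum_antidiagonal_eq_sum_range_succ_mk,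
      ← Fin.sum_univ_eq_sum_range (fun i => (Apoly c).coeff i * (Tpoly c).coeff (N - i)) (N + 1)]
    refine Finset.sum_congr rfl fun k _ => ?_
    rw [Apoly_coeff, Tpoly_coeff, dif_pos k.isLt, dif_pos (by omega : N - (k : ℕ) < N + 1)]
    congr 2
    exact congrArg c (Fin.ext (by simp only [Fin.val_mk]; omega))
  have hcN : Q.coeff N = ∑ k : Fin (N + 1),
      (a k * (starRingEnd ℂ) (a k) + b k * (starRingEnd ℂ) (b k)) := by
    rw [hQdef, coeff_add, hab a, hab b, Finset.sum_add_distrib]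
  have heval1 : Q.eval 1 =
      pEval a 1 * (starRingEnd ℂ) (pEval a 1) + pEval b 1 * (starRingEnd ℂ) (pEval b 1) := by
    rw [hQeval 1 one_ne_zero, pTilde_one, pTilde_one, one_pow, one_mul]
  have hQc : Q.coeff N =
      pEval a 1 * (starRingEnd ℂ) (pEval a 1) + pEval b 1 * (starRingEnd ℂ) (pEval b 1) := by
    rw [← heval1]
    conv_rhs => rw [hQm]
    simp [eval_monomial]
  refine ⟨hcN.symm.trans hQc, fun z hz => ?_⟩
  apply mul_left_cancel₀ (pow_ne_zero N hz)
  rw [← hQeval z hz]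
  conv_lhs => rw [hQm]
  simp [eval_monomial, hQc]
  ring

lemma isPolyFun_of_coeff {n : ℕ} (W : Polynomial ℂ) (f : ℂ → ℂ)
    (hW : ∀ z : ℂ, z ≠ 0 → W.eval z = z ^ n * f z)
    (h : ∀ d, d < n → W.coeff d = 0) : IsPolyFun f := by
  obtain ⟨q, hq⟩ := X_pow_dvd_iff.mpr h
  refine ⟨q, fun z hz => ?_⟩
  have h2 := hW z hz
  rw [hq, eval_mul, eval_pow, eval_X] at h2
  exact (mul_left_cancel₀ (pow_ne_zero n hz) h2).symm

lemma W1_eval {N : ℕ} (g : Fin N → ℂ) (a b : Fin (N + 1) → ℂ) {z : ℂ} (hz : z ≠ 0) :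
    (Npoly g * Apoly a - Tpoly b).eval z
      = z ^ N * (nEval g z * pEval a z - pTilde b z) := by
  rw [eval_sub, eval_mul, Npoly_eval g hz, Apoly_eval, Tpoly_eval b hz]; ring

lemma W2_eval {N : ℕ} (g : Fin N → ℂ) (a b : Fin (N + 1) → ℂ) {z : ℂ} (hz : z ≠ 0) :
    (Npoly g * Apoly b + Tpoly a).eval z
      = z ^ N * (nEval g z * pEval b z + pTilde a z) := by
  rw [eval_add, eval_mul, Npoly_eval g hz, Apoly_eval, Tpoly_eval a hz]; ring

lemma sum_conj_eq_zero {n : ℕ} {a b : Fin n → ℂ}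
    (h : ∑ k : Fin n, (a k * (starRingEnd ℂ) (a k) + b k * (starRingEnd ℂ) (b k)) = 0) :
    a = 0 ∧ b = 0 := by
  have h' : ∑ k : Fin n, (Complex.normSq (a k) + Complex.normSq (b k)) = 0 := by
    have h2 := h
    simp only [Complex.mul_conj] at h2
    norm_cast at h2
  have hz := (Finset.sum_eq_zero_iff_of_nonneg
    (fun k _ => add_nonneg (Complex.normSq_nonneg _) (Complex.normSq_nonneg _))).mp h'
  constructor <;> funext k <;> simp only [Pi.zero_apply]
  · have hk := hz k (Finset.mem_univ k)
    have h1 : Complex.normSq (a k) = 0 := by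
      nlinarith [Complex.normSq_nonneg (a k), Complex.normSq_nonneg (b k)]
    exact Complex.normSq_eq_zero.mp h1
  · have hk := hz k (Finset.mem_univ k)
    have h1 : Complex.normSq (b k) = 0 := by
      nlinarith [Complex.normSq_nonneg (a k), Complex.normSq_nonneg (b k)]
    exact Complex.normSq_eq_zero.mp h1

lemma IsPolyFun.congr' {f h : ℂ → ℂ} (hf : IsPolyFun f)
    (he : ∀ z : ℂ, z ≠ 0 → h z = f z) : IsPolyFun h :=
  ⟨hf.choose, fun z hz => (he z hz).trans (hf.choose_spec z hz)⟩

lemma IsPolyFun.sub' {f h : ℂ → ℂ} (hf : IsPolyFun f) (hh : IsPolyFun h) :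
    IsPolyFun (fun z => f z - h z) := by
  obtain ⟨p, hp⟩ := hf; obtain ⟨q, hq⟩ := hh
  exact ⟨p - q, fun z hz => by simp only [eval_sub]; rw [← hp z hz, ← hq z hz]⟩

lemma pEval_sub {N : ℕ} (u v : Fin (N + 1) → ℂ) (z : ℂ) :
    pEval (u - v) z = pEval u z - pEval v z := by
  simp [pEval, sub_mul, Finset.sum_sub_distrib]

lemma pTilde_sub {N : ℕ} (u v : Fin (N + 1) → ℂ) (z : ℂ) :
    pTilde (u - v) z = pTilde u z - pTilde v z := by
  simp [pTilde, sub_mul, Finset.sum_sub_distrib]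

lemma Apoly_add {N : ℕ} (u v : Fin (N + 1) → ℂ) : Apoly (u + v) = Apoly u + Apoly v := by
  simp [Apoly, Finset.sum_add_distrib]

lemma Tpoly_add {N : ℕ} (u v : Fin (N + 1) → ℂ) : Tpoly (u + v) = Tpoly u + Tpoly v := by
  simp [Tpoly, Finset.sum_add_distrib]

lemma Apoly_smul {N : ℕ} (r : ℝ) (u : Fin (N + 1) → ℂ) :
    Apoly (r • u) = (r : ℂ) • Apoly u := by
  simp [Apoly, Finset.smul_sum, Complex.real_smul, smul_monomial]

lemma Tpoly_smul {N : ℕ} (r : ℝ) (u : Fin (N + 1) → ℂ) :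
    Tpoly (r • u) = (r : ℂ) • Tpoly u := by
  simp [Tpoly, Finset.smul_sum, Complex.real_smul, smul_monomial, _root_.map_mul, Complex.conj_ofReal]

lemma pEval_add {N : ℕ} (u v : Fin (N + 1) → ℂ) (z : ℂ) :
    pEval (u + v) z = pEval u z + pEval v z := by
  simp [pEval, add_mul, Finset.sum_add_distrib]

lemma pEval_smul {N : ℕ} (r : ℝ) (u : Fin (N + 1) → ℂ) (z : ℂ) :
    pEval (r • u) z = (r : ℂ) * pEval u z := by
  simp [pEval, Finset.mul_sum, Complex.real_smul, mul_assoc]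

noncomputable def Emap {N : ℕ} (g : Fin N → ℂ) :
    ((Fin (N + 1) → ℂ) × (Fin (N + 1) → ℂ)) →ₗ[ℝ]
      ((Fin N → ℂ) × (Fin N → ℂ) × ℂ × ℂ) where
  toFun x := (fun m => (Npoly g * Apoly x.1 - Tpoly x.2).coeff m,
              fun m => (Npoly g * Apoly x.2 + Tpoly x.1).coeff m,
              pEval x.1 1, pEval x.2 1)
  map_add' x y := by
    simp only [Prod.fst_add, Prod.snd_add, Apoly_add, Tpoly_add, pEval_add, mul_add,
      Prod.mk_add_mk]
    refine Prod.ext ?_ (Prod.ext ?_ (Prod.ext rfl rfl)) <;> funext m <;>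
      simp only [Pi.add_apply, coeff_add, coeff_sub] <;> ring
  map_smul' r x := by
    simp only [Prod.smul_fst, Prod.smul_snd, Apoly_smul, Tpoly_smul, pEval_smul,
      RingHom.id_apply, Prod.smul_mk]
    refine Prod.ext ?_ (Prod.ext ?_ (Prod.ext ?_ ?_)) <;>
      first
      | rfl
      | (funext m
         simp only [Pi.smul_apply, Complex.real_smul, smul_eq_mul, mul_sub, mul_add,
           Algebra.mul_smul_comm, coeff_smul, coeff_sub, coeff_add]
         try ring)

lemma Emap_injective {N : ℕ} (g : Fin N → ℂ) : Function.Injective (Emap g) := by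
  rw [← LinearMap.ker_eq_bot, LinearMap.ker_eq_bot']
  rintro ⟨a, b⟩ hx
  have h1 : ∀ m : Fin N, (Npoly g * Apoly a - Tpoly b).coeff m = 0 :=
    fun m => congrFun (congrArg Prod.fst hx) m
  have h2 : ∀ m : Fin N, (Npoly g * Apoly b + Tpoly a).coeff m = 0 :=
    fun m => congrFun (congrArg (fun p => p.2.1) hx) m
  have h3 : pEval a 1 = 0 := congrArg (fun p => p.2.2.1) hx
  have h4 : pEval b 1 = 0 := congrArg (fun p => p.2.2.2) hx
  have hu : IsPolyFun (fun z => nEval g z * pEval a z - pTilde b z) :=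
    isPolyFun_of_coeff _ _ (fun z hz => W1_eval g a b hz)
      (fun d hd => h1 ⟨d, hd⟩)
  have hv : IsPolyFun (fun z => nEval g z * pEval b z + pTilde a z) :=
    isPolyFun_of_coeff _ _ (fun z hz => W2_eval g a b hz)
      (fun d hd => h2 ⟨d, hd⟩)
  have hk := (key g a b hu hv).1
  rw [h3, h4] at hk
  simp only [map_zero, mul_zero, zero_mul, add_zero] at hk
  obtain ⟨ha, hb⟩ := sum_conj_eq_zero hk
  exact Prod.ext ha hb

lemma Emap_surjective {N : ℕ} (g : Fin N → ℂ) : Function.Surjective (Emap g) := by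
  have hrank : Module.finrank ℝ ((Fin (N + 1) → ℂ) × (Fin (N + 1) → ℂ)) =
      Module.finrank ℝ ((Fin N → ℂ) × (Fin N → ℂ) × ℂ × ℂ) := by
    simp only [Module.finrank_prod, Module.finrank_pi_fintype,
      Complex.finrank_real_complex, Finset.sum_const, Finset.card_univ,
      Fintype.card_fin, smul_eq_mul]
    ring
  exact (LinearMap.injective_iff_surjective_of_finrank_eq_finrank hrank).mp
    (Emap_injective g)

/-- Theorem 1: for any nonzero `φ ∈ P⁻_N` there is a unique pair `α, β ∈ P⁺_N` with
`α α̃ + β β̃ = 1` on `ℂ \ {0}`, `α(1) = 1`, `β(1) = 0`, and all entries of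
`[[1,0],[φ,1]]·[[α,β],[-β̃,α̃]]` containing only nonnegative powers of `z`. -/
theorem daubechies_theorem1 (N : ℕ) (hN : 1 ≤ N) (g : Fin N → ℂ) (hg : g ≠ 0) :
    ∃! ab : (Fin (N + 1) → ℂ) × (Fin (N + 1) → ℂ),
      (∀ z : ℂ, z ≠ 0 →
        pEval ab.1 z * pTilde ab.1 z + pEval ab.2 z * pTilde ab.2 z = 1) ∧
      pEval ab.1 1 = 1 ∧ pEval ab.2 1 = 0 ∧
      ∀ i j : Fin 2, IsPolyFun (fun z =>
        ((!![(1 : ℂ), 0; nEval g z, 1] : Matrix (Fin 2) (Fin 2) ℂ) *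
          !![pEval ab.1 z, pEval ab.2 z; -pTilde ab.2 z, pTilde ab.1 z]) i j) := by
  obtain ⟨⟨a, b⟩, hab⟩ := Emap_surjective g (0, 0, 1, 0)
  have h1 : ∀ m : Fin N, (Npoly g * Apoly a - Tpoly b).coeff m = 0 := fun m => by
    have := congrFun (congrArg Prod.fst hab) m; simpa [Emap] using this
  have h2 : ∀ m : Fin N, (Npoly g * Apoly b + Tpoly a).coeff m = 0 := fun m => by
    have := congrFun (congrArg (fun p => p.2.1) hab) m; simpa [Emap] using this
  have h3 : pEval a 1 = 1 := congrArg (fun p => p.2.2.1) hab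
  have h4 : pEval b 1 = 0 := congrArg (fun p => p.2.2.2) hab
  have hu : IsPolyFun (fun z => nEval g z * pEval a z - pTilde b z) :=
    isPolyFun_of_coeff _ _ (fun z hz => W1_eval g a b hz) (fun d hd => h1 ⟨d, hd⟩)
  have hv : IsPolyFun (fun z => nEval g z * pEval b z + pTilde a z) :=
    isPolyFun_of_coeff _ _ (fun z hz => W2_eval g a b hz) (fun d hd => h2 ⟨d, hd⟩)
  have hkey := key g a b hu hv
  refine ⟨(a, b), ⟨?_, h3, h4, ?_⟩, ?_⟩
  · intro z hz
    rw [hkey.2 z hz, h3, h4]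
    simp
  · intro i j
    fin_cases i <;> fin_cases j
    · exact IsPolyFun.congr' ⟨Apoly a, fun z _ => (Apoly_eval a z).symm⟩
        (fun z hz => by simp [Matrix.mul_apply, Fin.sum_univ_two])
    · exact IsPolyFun.congr' ⟨Apoly b, fun z _ => (Apoly_eval b z).symm⟩
        (fun z hz => by simp [Matrix.mul_apply, Fin.sum_univ_two])
    · exact IsPolyFun.congr' hu
        (fun z hz => by simp [Matrix.mul_apply, Fin.sum_univ_two]; try ring)
    · exact IsPolyFun.congr' hv
        (fun z hz => by simp [Matrix.mul_apply, Fin.sum_univ_two]; try ring)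
  · rintro ⟨a', b'⟩ ⟨hc1, hc3, hc4, hmat⟩
    have hu' : IsPolyFun (fun z => nEval g z * pEval a' z - pTilde b' z) :=
      IsPolyFun.congr' (hmat 1 0)
        (fun z hz => by simp [Matrix.mul_apply, Fin.sum_univ_two]; try ring)
    have hv' : IsPolyFun (fun z => nEval g z * pEval b' z + pTilde a' z) :=
      IsPolyFun.congr' (hmat 1 1)
        (fun z hz => by simp [Matrix.mul_apply, Fin.sum_univ_two]; try ring)
    have hud : IsPolyFun (fun z => nEval g z * pEval (a' - a) z - pTilde (b' - b) z) :=
      IsPolyFun.congr' (IsPolyFun.sub' hu' hu)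
        (fun z hz => by rw [pEval_sub, pTilde_sub]; ring)
    have hvd : IsPolyFun (fun z => nEval g z * pEval (b' - b) z + pTilde (a' - a) z) :=
      IsPolyFun.congr' (IsPolyFun.sub' hv' hv)
        (fun z hz => by rw [pEval_sub, pTilde_sub]; ring)
    have hk := (key g (a' - a) (b' - b) hud hvd).1
    rw [pEval_sub, pEval_sub, hc3, h3, hc4, h4, sub_self, sub_self] at hk
    simp only [map_zero, mul_zero, zero_mul, add_zero] at hk
    obtain ⟨ha, hb⟩ := sum_conj_eq_zero hk
    exact Prod.ext (sub_eq_zero.mp ha) (sub_eq_zero.mp hb)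
end

section
/- Let N ≥ 1, φ ∈ P^-_N, and α, β ∈ P^+_N satisfy: all entries of [[1,0],[φ,1]]·[[α,β],[-β̃,α̃]] are polynomials in nonnegative powers of z, and α(z)α̃(z)+β(z)β̃(z)=1 on ℂ\{0}. Then |α(0)| + |β(0)| > 0, i.e., α and β do not both vanish at 0. -/
open Complex Finset Matrix

/-- The polynomial whose evaluation is `pEval a`. -/
noncomputable def toPoly {N : ℕ} (a : Fin (N + 1) → ℂ) : Polynomial ℂ :=
  ∑ k : Fin (N + 1), Polynomial.C (a k) * Polynomial.X ^ (k : ℕ)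

lemma toPoly_eval {N : ℕ} (a : Fin (N + 1) → ℂ) (z : ℂ) :
    (toPoly a).eval z = pEval a z := by
  simp [toPoly, pEval, Polynomial.eval_finset_sum]

/-- If `[[1,0],[φ,1]]·[[α,β],[-β̃,α̃]]` has only nonnegative powers of `z` in all entries and
`α α̃ + β β̃ = 1` on `ℂ \ {0}`, then `|α(0)| + |β(0)| > 0`. -/
theorem daubechies_zero_condition (N : ℕ) (hN : 1 ≤ N) (g : Fin N → ℂ)
    (a b : Fin (N + 1) → ℂ)
    (hpoly : ∀ i j : Fin 2, IsPolyFun (fun z =>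
      ((!![(1 : ℂ), 0; nEval g z, 1] : Matrix (Fin 2) (Fin 2) ℂ) *
        !![pEval a z, pEval b z; -pTilde b z, pTilde a z]) i j))
    (hunit : ∀ z : ℂ, z ≠ 0 →
      pEval a z * pTilde a z + pEval b z * pTilde b z = 1) :
    0 < ‖pEval a 0‖ + ‖pEval b 0‖ := by
  by_contra h
  push_neg at h
  have ha0 : pEval a 0 = 0 := by
    have h1 := norm_nonneg (pEval a 0)
    have h2 := norm_nonneg (pEval b 0)
    have : ‖pEval a 0‖ = 0 := by linarith
    exact norm_eq_zero.mp this
  have hb0 : pEval b 0 = 0 := by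
    have h1 := norm_nonneg (pEval a 0)
    have h2 := norm_nonneg (pEval b 0)
    have : ‖pEval b 0‖ = 0 := by linarith
    exact norm_eq_zero.mp this
  obtain ⟨p, hp⟩ := hpoly 1 0
  obtain ⟨q, hq⟩ := hpoly 1 1
  simp [Matrix.mul_apply, Fin.sum_univ_two] at hp hq
  set R : Polynomial ℂ := toPoly a * q - toPoly b * p with hR
  have hRz : ∀ z : ℂ, z ≠ 0 → R.eval z = 1 := by
    intro z hz
    have h1 := hp z hz
    have h2 := hq z hz
    have h3 := hunit z hz
    simp only [hR, Polynomial.eval_sub, Polynomial.eval_mul, toPoly_eval]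
    rw [← h1, ← h2]
    linear_combination h3
  have hRC : R = Polynomial.C 1 := by
    have hsub : R - Polynomial.C 1 = 0 := by
      apply Polynomial.eq_zero_of_infinite_isRoot
      have hinf : ({(0 : ℂ)}ᶜ : Set ℂ).Infinite :=
        Set.Finite.infinite_compl (Set.finite_singleton 0)
      apply hinf.mono
      intro z hz
      have hz0 : z ≠ 0 := hz
      simp [Polynomial.IsRoot, hRz z hz0]
    exact sub_eq_zero.mp hsub
  have heval : R.eval 0 = 1 := by rw [hRC]; simp
  rw [hR] at heval
  simp [Polynomial.eval_sub, Polynomial.eval_mul, toPoly_eval, ha0, hb0] at heval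
end

section
/- Let N ≥ 1 and γ_1,...,γ_N ∈ ℂ, not all zero. Let Θ be the (N+1)×(N+1) Hankel matrix with Θ_{ij} = γ_{i+j} (γ_0 := 0, γ_k := 0 for k > N). Let X ∈ ℂ^{N+1} be the unique solution of (Θ̄Θ + I)X = e_1 (first standard basis vector), and Y = Θ̄X̄. Then the polynomials α(z) = Σ_{k=0}^N x_k z^k and β(z) = Σ_{k=0}^N y_k z^k satisfy: for φ(z) = Σ_{k=1}^N γ_k z^{-k}, both φα - β̃ and φβ + α̃ contain only nonnegative powers of z, and α(z)α̃(z)+β(z)β̃(z) is a positive constant. -/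
open Complex Finset Matrix

namespace DaubAux

open Polynomial

noncomputable def pol (N : ℕ) (v : Fin (N + 1) → ℂ) : Polynomial ℂ :=
  ∑ k : Fin (N + 1), C (v k) * X ^ (k : ℕ)

noncomputable def polT (N : ℕ) (v : Fin (N + 1) → ℂ) : Polynomial ℂ :=
  ∑ k : Fin (N + 1), C ((starRingEnd ℂ) (v k)) * X ^ (N - (k : ℕ))

noncomputable def gpol (N : ℕ) (γ : ℕ → ℂ) : Polynomial ℂ :=
  ∑ m ∈ Finset.Icc 1 N, C (γ m) * X ^ (N - m)

lemma pow_sub_eq (z : ℂ) (hz : z ≠ 0) {k N : ℕ} (h : k ≤ N) :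
    z ^ (N - k) = z ^ N * (z⁻¹) ^ k := by
  rw [inv_pow, eq_comm, mul_inv_eq_iff_eq_mul₀ (pow_ne_zero _ hz), ← pow_add]
  congr 1
  omega

lemma eval_pol {N : ℕ} (v : Fin (N + 1) → ℂ) (z : ℂ) :
    (pol N v).eval z = pEval v z := by
  simp [pol, pEval, eval_finset_sum]

lemma eval_polT {N : ℕ} (v : Fin (N + 1) → ℂ) {z : ℂ} (hz : z ≠ 0) :
    (polT N v).eval z = z ^ N * pTilde v z := by
  simp only [polT, pTilde, eval_finset_sum, eval_mul, eval_C, eval_pow, eval_X, Finset.mul_sum]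
  refine Finset.sum_congr rfl fun k _ => ?_
  rw [pow_sub_eq z hz (Nat.lt_succ_iff.mp k.isLt)]
  ring

lemma eval_gpol {N : ℕ} (γ : ℕ → ℂ) {z : ℂ} (hz : z ≠ 0) :
    (gpol N γ).eval z = z ^ N * ∑ m ∈ Finset.Icc 1 N, γ m * z⁻¹ ^ m := by
  simp only [gpol, eval_finset_sum, eval_mul, eval_C, eval_pow, eval_X, Finset.mul_sum]
  refine Finset.sum_congr rfl fun m hm => ?_
  rw [Finset.mem_Icc] at hm
  rw [pow_sub_eq z hz hm.2]
  ring

lemma coeff_sum_mul_sum {ι κ : Type*} {s : Finset ι} {t : Finset κ}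
    (f : ι → ℂ) (g : κ → ℂ) (e₁ : ι → ℕ) (e₂ : κ → ℕ) (d : ℕ) :
    ((∑ i ∈ s, C (f i) * X ^ e₁ i) * (∑ j ∈ t, C (g j) * X ^ e₂ j)).coeff d
      = ∑ i ∈ s, ∑ j ∈ t, if e₁ i + e₂ j = d then f i * g j else 0 := by
  rw [Finset.sum_mul_sum, Polynomial.finset_sum_coeff]
  refine Finset.sum_congr rfl fun i _ => ?_
  rw [Polynomial.finset_sum_coeff]
  refine Finset.sum_congr rfl fun j _ => ?_
  rw [mul_mul_mul_comm, ← C_mul, ← pow_add, coeff_C_mul, coeff_X_pow]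
  simp [eq_comm, mul_ite]

lemma coeff_pol_mul_polT {N : ℕ} (v w : Fin (N + 1) → ℂ) (k : ℕ) :
    (pol N v * polT N w).coeff k
      = ∑ j : Fin (N + 1), ∑ l : Fin (N + 1),
          if (j : ℕ) + (N - (l : ℕ)) = k then v j * (starRingEnd ℂ) (w l) else 0 :=
  coeff_sum_mul_sum _ _ _ _ _

lemma coeff_gpol_mul_pol {N : ℕ} (γ : ℕ → ℂ) (v : Fin (N + 1) → ℂ) (d : ℕ) :
    (gpol N γ * pol N v).coeff d
      = ∑ m ∈ Finset.Icc 1 N, ∑ j : Fin (N + 1),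
          if (N - m) + (j : ℕ) = d then γ m * v j else 0 :=
  coeff_sum_mul_sum _ _ _ _ _

lemma coeff_polT {N : ℕ} (v : Fin (N + 1) → ℂ) {d : ℕ} (hd : d ≤ N) :
    (polT N v).coeff d = (starRingEnd ℂ) (v ⟨N - d, by omega⟩) := by
  rw [polT, Polynomial.finset_sum_coeff]
  rw [Finset.sum_eq_single (⟨N - d, by omega⟩ : Fin (N + 1))]
  · rw [coeff_C_mul, coeff_X_pow, if_pos (by simp; omega), mul_one]
  · intro k _ hk
    rw [coeff_C_mul, coeff_X_pow, if_neg, mul_zero]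
    intro h
    apply hk
    have hk' : (k : ℕ) ≤ N := Nat.lt_succ_iff.mp k.isLt
    apply Fin.ext
    simp
    omega
  · intro h
    exact absurd (Finset.mem_univ _) h

lemma key_sum {N d : ℕ} (hd : d < N) (γ : ℕ → ℂ) (hγtop : ∀ k, N < k → γ k = 0)
    (v : Fin (N + 1) → ℂ) :
    (∑ m ∈ Finset.Icc 1 N, ∑ j : Fin (N + 1),
        if (N - m) + (j : ℕ) = d then γ m * v j else 0)
      = ∑ j : Fin (N + 1), γ (N - d + (j : ℕ)) * v j := by
  rw [Finset.sum_comm]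
  refine Finset.sum_congr rfl fun j _ => ?_
  have hj : (j : ℕ) ≤ N := Nat.lt_succ_iff.mp j.isLt
  by_cases h : (j : ℕ) ≤ d
  · rw [Finset.sum_eq_single (N - d + (j : ℕ))]
    · rw [if_pos (by omega)]
    · intro m hm hne
      rw [Finset.mem_Icc] at hm
      rw [if_neg (by omega)]
    · intro hmem
      exfalso
      exact hmem (Finset.mem_Icc.mpr (by omega))
  · rw [Finset.sum_eq_zero, hγtop _ (by omega), zero_mul]
    intro m hm
    rw [Finset.mem_Icc] at hm
    rw [if_neg (by omega)]

lemma coeff_diag {N : ℕ} (v : Fin (N + 1) → ℂ) :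
    (pol N v * polT N v).coeff N = ∑ j : Fin (N + 1), v j * (starRingEnd ℂ) (v j) := by
  rw [coeff_pol_mul_polT]
  refine Finset.sum_congr rfl fun j _ => ?_
  have hj : (j : ℕ) ≤ N := Nat.lt_succ_iff.mp j.isLt
  rw [Finset.sum_eq_single j]
  · rw [if_pos (by omega)]
  · intro l _ hne
    have hl : (l : ℕ) ≤ N := Nat.lt_succ_iff.mp l.isLt
    rw [if_neg]
    intro h
    exact hne (Fin.ext (by omega))
  · intro h
    exact absurd (Finset.mem_univ _) h

lemma sym_one {N : ℕ} (v : Fin (N + 1) → ℂ) {k : ℕ} (hk : k ≤ 2 * N) :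
    (pol N v * polT N v).coeff (2 * N - k)
      = (starRingEnd ℂ) ((pol N v * polT N v).coeff k) := by
  rw [coeff_pol_mul_polT, coeff_pol_mul_polT, map_sum, Finset.sum_comm]
  refine Finset.sum_congr rfl fun j _ => ?_
  rw [map_sum]
  refine Finset.sum_congr rfl fun l _ => ?_
  have hj : (j : ℕ) ≤ N := Nat.lt_succ_iff.mp j.isLt
  have hl : (l : ℕ) ≤ N := Nat.lt_succ_iff.mp l.isLt
  by_cases h : (j : ℕ) + (N - (l : ℕ)) = k
  · rw [if_pos (by omega), if_pos h]
    simp [mul_comm]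
  · rw [if_neg (by omega), if_neg h, map_zero]

lemma coeff_top {N : ℕ} (v w : Fin (N + 1) → ℂ) {k : ℕ} (hk : 2 * N < k) :
    (pol N v * polT N w).coeff k = 0 := by
  rw [coeff_pol_mul_polT]
  refine Finset.sum_eq_zero fun j _ => Finset.sum_eq_zero fun l _ => ?_
  have hj : (j : ℕ) ≤ N := Nat.lt_succ_iff.mp j.isLt
  rw [if_neg (by omega)]

end DaubAux

/-- Constructive part of Theorem 1: the polynomials `α, β` built from the solution of the
Hankel system `(Θ̄Θ + I)X = e₁`, `Y = Θ̄ X̄` satisfy that `φα - β̃` and `φβ + α̃` have only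
nonnegative powers of `z` and `α α̃ + β β̃` is a positive constant. -/
theorem daubechies_construction (N : ℕ) (hN : 1 ≤ N) (γ : ℕ → ℂ)
    (hγ0 : γ 0 = 0) (hγtop : ∀ k : ℕ, N < k → γ k = 0) (hγ : ∃ k, 1 ≤ k ∧ k ≤ N ∧ γ k ≠ 0)
    (Θ : Matrix (Fin (N + 1)) (Fin (N + 1)) ℂ)
    (hΘ : ∀ i j : Fin (N + 1), Θ i j = γ ((i : ℕ) + (j : ℕ)))
    (X Y : Fin (N + 1) → ℂ)
    (hX : (Θ.map (starRingEnd ℂ) * Θ + 1).mulVec X =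
      fun i => if i = 0 then (1 : ℂ) else 0)
    (hY : Y = (Θ.map (starRingEnd ℂ)).mulVec (fun i => (starRingEnd ℂ) (X i)))
    (φ : ℂ → ℂ) (hφ : ∀ z : ℂ, φ z = ∑ k ∈ Finset.Icc 1 N, γ k * z⁻¹ ^ k) :
    IsPolyFun (fun z => φ z * pEval X z - pTilde Y z) ∧
    IsPolyFun (fun z => φ z * pEval Y z + pTilde X z) ∧
    ∃ c : ℝ, 0 < c ∧ ∀ z : ℂ, z ≠ 0 →
      pEval X z * pTilde X z + pEval Y z * pTilde Y z = (c : ℂ) := by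
  
  have hYconj : ∀ m : Fin (N + 1), Θ.mulVec X m = (starRingEnd ℂ) (Y m) := by
    intro m
    rw [hY]
    simp [Matrix.mulVec, dotProduct, Matrix.map_apply, map_sum]
  have hsys : ∀ m : Fin (N + 1), Θ.mulVec Y m + (starRingEnd ℂ) (X m)
      = if m = 0 then 1 else 0 := by
    intro m
    have h0 := congrFun hX m
    simp only [Matrix.add_mulVec, Matrix.one_mulVec, ← Matrix.mulVec_mulVec,
      Pi.add_apply] at h0
    have hfun : Θ.mulVec X = fun j => (starRingEnd ℂ) (Y j) := funext hYconj
    rw [hfun] at h0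
    have h1 : (Θ.map (starRingEnd ℂ)).mulVec (fun j => (starRingEnd ℂ) (Y j)) m
        = (starRingEnd ℂ) (Θ.mulVec Y m) := by
      simp [Matrix.mulVec, dotProduct, Matrix.map_apply, map_sum]
    rw [h1] at h0
    have h2 := congrArg (starRingEnd ℂ) h0
    simpa [apply_ite (starRingEnd ℂ)] using h2
  have hmul : ∀ (v : Fin (N + 1) → ℂ) (d : ℕ), d < N →
      (DaubAux.gpol N γ * DaubAux.pol N v).coeff d
        = Θ.mulVec v ⟨N - d, by omega⟩ := by
    intro v d hd
    rw [DaubAux.coeff_gpol_mul_pol, DaubAux.key_sum hd γ hγtop]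
    simp only [Matrix.mulVec, dotProduct]
    refine Finset.sum_congr rfl fun j _ => ?_
    rw [hΘ]
  have need1 : (Polynomial.X : Polynomial ℂ) ^ N ∣
      (DaubAux.gpol N γ * DaubAux.pol N X - DaubAux.polT N Y) := by
    rw [Polynomial.X_pow_dvd_iff]
    intro d hd
    rw [Polynomial.coeff_sub, hmul X d hd, DaubAux.coeff_polT Y (by omega : d ≤ N),
      hYconj]
    exact sub_self _
  have need2 : (Polynomial.X : Polynomial ℂ) ^ N ∣
      (DaubAux.gpol N γ * DaubAux.pol N Y + DaubAux.polT N X) := by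
    rw [Polynomial.X_pow_dvd_iff]
    intro d hd
    rw [Polynomial.coeff_add, hmul Y d hd, DaubAux.coeff_polT X (by omega : d ≤ N),
      hsys, if_neg]
    intro h
    have := congrArg (Fin.val) h
    simp at this
    omega
  obtain ⟨q₁, hq₁⟩ := need1
  obtain ⟨q₂, hq₂⟩ := need2
  refine ⟨⟨q₁, ?_⟩, ⟨q₂, ?_⟩, ?_⟩
  · intro z hz
    have hzN : z ^ N ≠ 0 := pow_ne_zero _ hz
    apply mul_left_cancel₀ hzN
    show z ^ N * (φ z * pEval X z - pTilde Y z) = z ^ N * q₁.eval z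
    have h1 : z ^ N * (φ z * pEval X z - pTilde Y z)
        = (DaubAux.gpol N γ * DaubAux.pol N X - DaubAux.polT N Y).eval z := by
      rw [Polynomial.eval_sub, Polynomial.eval_mul, DaubAux.eval_gpol γ hz,
        DaubAux.eval_pol, DaubAux.eval_polT Y hz, hφ]
      ring
    rw [h1, hq₁, Polynomial.eval_mul, Polynomial.eval_pow, Polynomial.eval_X]
  · intro z hz
    have hzN : z ^ N ≠ 0 := pow_ne_zero _ hz
    apply mul_left_cancel₀ hzN
    show z ^ N * (φ z * pEval Y z + pTilde X z) = z ^ N * q₂.eval z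
    have h1 : z ^ N * (φ z * pEval Y z + pTilde X z)
        = (DaubAux.gpol N γ * DaubAux.pol N Y + DaubAux.polT N X).eval z := by
      rw [Polynomial.eval_add, Polynomial.eval_mul, DaubAux.eval_gpol γ hz,
        DaubAux.eval_pol, DaubAux.eval_polT X hz, hφ]
      ring
    rw [h1, hq₂, Polynomial.eval_mul, Polynomial.eval_pow, Polynomial.eval_X]
  · set p : Polynomial ℂ := DaubAux.pol N X * DaubAux.polT N X
      + DaubAux.pol N Y * DaubAux.polT N Y with hp
    have hfact : p = Polynomial.X ^ N
        * (DaubAux.pol N X * q₂ - DaubAux.pol N Y * q₁) := by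
      have h0 : p = DaubAux.pol N X
            * (DaubAux.gpol N γ * DaubAux.pol N Y + DaubAux.polT N X)
          - DaubAux.pol N Y
            * (DaubAux.gpol N γ * DaubAux.pol N X - DaubAux.polT N Y) := by
        rw [hp]; ring
      rw [h0, hq₁, hq₂]; ring
    have hlow : ∀ k < N, p.coeff k = 0 := Polynomial.X_pow_dvd_iff.mp ⟨_, hfact⟩
    have hsym : ∀ k ≤ 2 * N, p.coeff (2 * N - k) = (starRingEnd ℂ) (p.coeff k) := by
      intro k hk
      rw [hp, Polynomial.coeff_add, Polynomial.coeff_add, map_add,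
        DaubAux.sym_one X hk, DaubAux.sym_one Y hk]
    set r : ℝ := ∑ j : Fin (N + 1), (Complex.normSq (X j) + Complex.normSq (Y j))
      with hr
    have hcN : p.coeff N = (r : ℂ) := by
      rw [hp, Polynomial.coeff_add, DaubAux.coeff_diag, DaubAux.coeff_diag, hr]
      simp only [Complex.mul_conj]
      push_cast
      rw [Finset.sum_add_distrib]
    have hpform : p = Polynomial.C ((r : ℂ)) * Polynomial.X ^ N := by
      ext k
      rw [Polynomial.coeff_C_mul, Polynomial.coeff_X_pow]
      rcases lt_trichotomy k N with h | h | h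
      · rw [hlow k h, if_neg (by omega), mul_zero]
      · subst h
        rw [hcN, if_pos rfl, mul_one]
      · rw [if_neg (by omega), mul_zero]
        by_cases h2 : k ≤ 2 * N
        · have hs := hsym k h2
          rw [hlow _ (by omega : 2 * N - k < N)] at hs
          simpa using hs.symm
        · rw [hp, Polynomial.coeff_add, DaubAux.coeff_top X X (by omega),
            DaubAux.coeff_top Y Y (by omega), add_zero]
    have hXne : ∃ j, X j ≠ 0 := by
      by_contra h
      push_neg at h
      have hX0 : X = 0 := funext fun j => h j
      rw [hX0, Matrix.mulVec_zero] at hX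
      have h0 := congrFun hX 0
      simp at h0
    obtain ⟨j, hj⟩ := hXne
    have hrpos : 0 < r := by
      rw [hr]
      refine Finset.sum_pos'
        (fun i _ => add_nonneg (Complex.normSq_nonneg _) (Complex.normSq_nonneg _))
        ⟨j, Finset.mem_univ j, ?_⟩
      exact add_pos_of_pos_of_nonneg (Complex.normSq_pos.mpr hj)
        (Complex.normSq_nonneg _)
    refine ⟨r, hrpos, fun z hz => ?_⟩
    have hzN : z ^ N ≠ 0 := pow_ne_zero _ hz
    apply mul_left_cancel₀ hzN
    have h1 : z ^ N * (pEval X z * pTilde X z + pEval Y z * pTilde Y z)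
        = p.eval z := by
      rw [hp, Polynomial.eval_add, Polynomial.eval_mul, Polynomial.eval_mul,
        DaubAux.eval_pol, DaubAux.eval_polT X hz, DaubAux.eval_pol,
        DaubAux.eval_polT Y hz]
      ring
    rw [h1, hpform, Polynomial.eval_mul, Polynomial.eval_C, Polynomial.eval_pow,
      Polynomial.eval_X]
    ring
end

section
/- If φ ∈ P^-_N has rational coefficients, then the unique α, β ∈ P^+_N satisfying α α̃ + β β̃ = 1, α(1)=1, β(1)=0, and the condition that [[1,0],[φ,1]]·[[α,β],[-β̃,α̃]] has entries with only nonnegative powers of z, have rational coefficients as well. -/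
open Complex Finset Matrix

/-- extended rational coefficient sequence -/
def GQ {N : ℕ} (g : Fin N → ℚ) : ℕ → ℚ :=
  fun j => ∑ k : Fin N, if (k : ℕ) + 1 = j then g k else 0

/-- extended coefficient sequence, in `ℂ` -/
noncomputable def Gc {N : ℕ} (g : Fin N → ℚ) : ℕ → ℂ :=
  fun j => ((GQ g j : ℚ) : ℂ)

lemma Gc_conj {N : ℕ} (g : Fin N → ℚ) (j : ℕ) :
    (starRingEnd ℂ) (Gc g j) = Gc g j := by
  simp [Gc]

lemma extract {N : ℕ} (g : Fin N → ℚ) (u w : Fin (N+1) → ℂ)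
    (h : IsPolyFun fun z => nEval (fun k => ((g k : ℚ) : ℂ)) z * pEval u z + pTilde w z) :
    ∀ m : Fin (N+1), (m : ℕ) ≠ 0 →
      ∑ l : Fin (N+1), Gc g ((l : ℕ) + (m : ℕ)) * u l = -(starRingEnd ℂ) (w m) := by
  obtain ⟨p, hp⟩ := h
  set Q : Polynomial ℂ :=
    (∑ k : Fin N, ∑ l : Fin (N+1),
      Polynomial.C (((g k : ℚ) : ℂ) * u l) * Polynomial.X ^ (N - ((k : ℕ) + 1) + (l : ℕ))) +
    ∑ l : Fin (N+1), Polynomial.C ((starRingEnd ℂ) (w l)) * Polynomial.X ^ (N - (l : ℕ))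
    with hQdef
  have hzj : ∀ (z : ℂ), z ≠ 0 → ∀ j : ℕ, j ≤ N → z ^ (N - j) = z ^ N * z⁻¹ ^ j := by
    intro z hz j hj
    rw [inv_pow, pow_sub₀ z hz hj]
  have key : ∀ z : ℂ, z ≠ 0 → Q.eval z = (Polynomial.X ^ N * p).eval z := by
    intro z hz
    have h1 : Q.eval z =
        (∑ k : Fin N, ∑ l : Fin (N+1),
          ((g k : ℚ) : ℂ) * u l * z ^ (N - ((k : ℕ) + 1) + (l : ℕ))) +
        ∑ l : Fin (N+1), (starRingEnd ℂ) (w l) * z ^ (N - (l : ℕ)) := by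
      simp [hQdef, Polynomial.eval_finset_sum]
    rw [h1, Polynomial.eval_mul, Polynomial.eval_pow, Polynomial.eval_X, ← hp z hz]
    rw [mul_add]
    congr 1
    · rw [nEval, pEval, Finset.sum_mul_sum, Finset.mul_sum]
      refine Finset.sum_congr rfl fun k _ => ?_
      rw [Finset.mul_sum]
      refine Finset.sum_congr rfl fun l _ => ?_
      rw [pow_add, hzj z hz ((k : ℕ) + 1) k.isLt]
      ring
    · rw [pTilde, Finset.mul_sum]
      refine Finset.sum_congr rfl fun l _ => ?_
      rw [hzj z hz (l : ℕ) (Nat.lt_succ_iff.mp l.isLt)]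
      ring
  have hQp : Q = Polynomial.X ^ N * p := by
    refine Polynomial.eq_of_infinite_eval_eq _ _ ?_
    refine Set.Infinite.mono ?_ ((Set.finite_singleton (0 : ℂ)).infinite_compl)
    intro z hz
    exact key z hz
  intro m hm
  have hmN : (m : ℕ) ≤ N := Nat.lt_succ_iff.mp m.isLt
  have hco : Q.coeff (N - (m : ℕ)) = 0 := by
    rw [hQp, Polynomial.coeff_X_pow_mul', if_neg]
    omega
  have hco2 : Q.coeff (N - (m : ℕ)) =
      (∑ k : Fin N, ∑ l : Fin (N+1),
        if N - (m : ℕ) = N - ((k : ℕ) + 1) + (l : ℕ) then ((g k : ℚ) : ℂ) * u l else 0) +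
      ∑ l : Fin (N+1), if N - (m : ℕ) = N - (l : ℕ) then (starRingEnd ℂ) (w l) else 0 := by
    simp only [hQdef, Polynomial.coeff_add, Polynomial.finset_sum_coeff,
      Polynomial.coeff_C_mul, Polynomial.coeff_X_pow, mul_ite, mul_one, mul_zero]
  have hs2 : (∑ l : Fin (N+1), if N - (m : ℕ) = N - (l : ℕ) then (starRingEnd ℂ) (w l) else 0)
      = (starRingEnd ℂ) (w m) := by
    rw [Finset.sum_eq_single m]
    · rw [if_pos rfl]
    · intro l _ hlm
      rw [if_neg]
      intro hcond
      exact hlm (Fin.ext (by have hl := l.isLt; omega))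
    · intro hmem; exact absurd (Finset.mem_univ m) hmem
  have hs1 : (∑ k : Fin N, ∑ l : Fin (N+1),
      if N - (m : ℕ) = N - ((k : ℕ) + 1) + (l : ℕ) then ((g k : ℚ) : ℂ) * u l else 0)
      = ∑ l : Fin (N+1), Gc g ((l : ℕ) + (m : ℕ)) * u l := by
    rw [Finset.sum_comm]
    refine Finset.sum_congr rfl fun l _ => ?_
    have hterm : ∀ k : Fin N,
        (if N - (m : ℕ) = N - ((k : ℕ) + 1) + (l : ℕ) then ((g k : ℚ) : ℂ) * u l else 0)
        = (if (k : ℕ) + 1 = (l : ℕ) + (m : ℕ) then ((g k : ℚ) : ℂ) else 0) * u l := by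
      intro k
      have hk := k.isLt
      have hl := l.isLt
      by_cases hc : (k : ℕ) + 1 = (l : ℕ) + (m : ℕ)
      · rw [if_pos (by omega), if_pos hc]
      · rw [if_neg (by omega), if_neg hc, zero_mul]
    simp_rw [hterm]
    rw [← Finset.sum_mul]
    congr 1
    simp only [Gc, GQ]
    push_cast [apply_ite (fun q : ℚ => (q : ℂ))]
    rfl
  have hfinal := hco
  rw [hco2, hs1, hs2] at hfinal
  linear_combination hfinal

def Pm {N : ℕ} (g : Fin N → ℚ) (μ : ℂ) (u : Fin (N + 1) → ℂ) : Prop :=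
  ∀ m : Fin (N + 1), (m : ℕ) ≠ 0 →
    ∑ l : Fin (N + 1), Gc g ((l : ℕ) + (m : ℕ)) * u l = μ * u m

lemma key0 {N : ℕ} (g : Fin N → ℚ) (μ : ℂ) (hμ : (starRingEnd ℂ) μ ≠ μ)
    (w : Fin (N + 1) → ℂ) (hw : Pm g μ w) (h0 : w 0 = 0) : w = 0 := by
  set S : ℝ := ∑ m : Fin (N + 1), Complex.normSq (w m) with hS
  set H : ℂ := ∑ m : Fin (N + 1), (starRingEnd ℂ) (w m) *
      (∑ l : Fin (N + 1), Gc g ((l : ℕ) + (m : ℕ)) * w l) with hHdef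
  have hH : H = μ * (S : ℂ) := by
    have hterm : ∀ m : Fin (N + 1), (starRingEnd ℂ) (w m) *
        (∑ l : Fin (N + 1), Gc g ((l : ℕ) + (m : ℕ)) * w l)
        = μ * (Complex.normSq (w m) : ℂ) := by
      intro m
      by_cases hm : (m : ℕ) = 0
      · have hm0 : m = 0 := Fin.ext hm
        rw [hm0, h0]
        simp
      · rw [hw m hm, show (starRingEnd ℂ) (w m) * (μ * w m)
          = μ * (w m * (starRingEnd ℂ) (w m)) by ring, Complex.mul_conj]
    rw [hHdef, Finset.sum_congr rfl fun m _ => hterm m, ← Finset.mul_sum, hS]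
    push_cast
    rfl
  have hHd : H = ∑ m : Fin (N + 1), ∑ l : Fin (N + 1),
      Gc g ((l : ℕ) + (m : ℕ)) * ((starRingEnd ℂ) (w m) * w l) := by
    rw [hHdef]
    refine Finset.sum_congr rfl fun m _ => ?_
    rw [Finset.mul_sum]
    exact Finset.sum_congr rfl fun l _ => by ring
  have hconjH : (starRingEnd ℂ) H = H := by
    conv_lhs => rw [hHd]
    rw [map_sum]
    have : ∀ m : Fin (N + 1), (starRingEnd ℂ) (∑ l : Fin (N + 1),
        Gc g ((l : ℕ) + (m : ℕ)) * ((starRingEnd ℂ) (w m) * w l))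
        = ∑ l : Fin (N + 1), Gc g ((l : ℕ) + (m : ℕ)) * ((starRingEnd ℂ) (w l) * w m) := by
      intro m
      rw [map_sum]
      refine Finset.sum_congr rfl fun l _ => ?_
      rw [_root_.map_mul, _root_.map_mul, Gc_conj, Complex.conj_conj]
      ring
    rw [Finset.sum_congr rfl fun m _ => this m, Finset.sum_comm, hHd]
    refine Finset.sum_congr rfl fun a _ => Finset.sum_congr rfl fun b _ => ?_
    rw [add_comm (b : ℕ) (a : ℕ)]
  have hSS : (S : ℂ) = 0 := by
    have h1 : (starRingEnd ℂ) H = (starRingEnd ℂ) μ * (S : ℂ) := by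
      rw [hH, _root_.map_mul, Complex.conj_ofReal]
    have h2 : ((starRingEnd ℂ) μ - μ) * (S : ℂ) = 0 := by
      rw [sub_mul, ← h1, hconjH, hH]
      ring
    rcases mul_eq_zero.mp h2 with h | h
    · exact absurd (sub_eq_zero.mp h) hμ
    · exact h
  have hS0 : S = 0 := by exact_mod_cast hSS
  have hall : ∀ m ∈ Finset.univ, Complex.normSq (w m) = 0 := by
    rw [← Finset.sum_eq_zero_iff_of_nonneg (fun m _ => Complex.normSq_nonneg (w m))]
    exact hS0
  funext m
  exact Complex.normSq_eq_zero.mp (hall m (Finset.mem_univ m))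

lemma uniquePm {N : ℕ} (g : Fin N → ℚ) (μ : ℂ) (hμ : (starRingEnd ℂ) μ ≠ μ)
    (u : Fin (N + 1) → ℂ) (hu : Pm g μ u) (husum : ∑ m : Fin (N + 1), u m = 1)
    (v : Fin (N + 1) → ℂ) (hv : Pm g μ v) (hvsum : ∑ m : Fin (N + 1), v m = 0) :
    v = 0 := by
  set w : Fin (N + 1) → ℂ := fun m => v 0 * u m - u 0 * v m with hwdef
  have hw : Pm g μ w := by
    intro m hm
    have : ∑ l : Fin (N + 1), Gc g ((l : ℕ) + (m : ℕ)) * w l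
        = v 0 * (∑ l : Fin (N + 1), Gc g ((l : ℕ) + (m : ℕ)) * u l)
        - u 0 * (∑ l : Fin (N + 1), Gc g ((l : ℕ) + (m : ℕ)) * v l) := by
      rw [Finset.mul_sum, Finset.mul_sum, ← Finset.sum_sub_distrib]
      exact Finset.sum_congr rfl fun l _ => by rw [hwdef]; ring
    rw [this, hu m hm, hv m hm, hwdef]
    ring
  have hw0 : w 0 = 0 := by rw [hwdef]; ring
  have hwz : w = 0 := key0 g μ hμ w hw hw0
  have hv0 : v 0 = 0 := by
    have hsw : ∑ m : Fin (N + 1), w m = v 0 := by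
      rw [hwdef]
      rw [Finset.sum_sub_distrib, ← Finset.mul_sum, ← Finset.mul_sum, husum, hvsum]
      ring
    rw [hwz] at hsw
    simpa using hsw.symm
  have hu0 : u 0 ≠ 0 := by
    intro hu0
    have : u = 0 := key0 g μ hμ u hu hu0
    rw [this] at husum
    simp at husum
  funext m
  have := congrFun hwz m
  simp only [hwdef, Pi.zero_apply] at this
  rw [hv0, zero_mul, zero_sub, neg_eq_zero] at this
  rcases mul_eq_zero.mp this with h | h
  · exact absurd h hu0
  · exact h

def Msys {N : ℕ} (g : Fin N → ℚ) :
    Matrix (Fin (N + 1) ⊕ Fin (N + 1)) (Fin (N + 1) ⊕ Fin (N + 1)) ℚ :=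
  fun i j =>
    match i, j with
    | Sum.inl m, Sum.inl l => if (m : ℕ) = 0 then 1 else GQ g ((l : ℕ) + (m : ℕ))
    | Sum.inl m, Sum.inr l => if (m : ℕ) = 0 then 0 else if l = m then -1 else 0
    | Sum.inr m, Sum.inl l => if (m : ℕ) = 0 then 0 else if l = m then 1 else 0
    | Sum.inr m, Sum.inr l => if (m : ℕ) = 0 then 1 else GQ g ((l : ℕ) + (m : ℕ))

def Esys {N : ℕ} : (Fin (N + 1) ⊕ Fin (N + 1)) → ℚ :=
  fun i => match i with
    | Sum.inl m => if (m : ℕ) = 0 then 1 else 0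
    | Sum.inr _ => 0

lemma row_inl {N : ℕ} (g : Fin N → ℚ) (y : (Fin (N + 1) ⊕ Fin (N + 1)) → ℂ) (m : Fin (N + 1)) :
    ((Msys g).map (fun q : ℚ => (q : ℂ))).mulVec y (Sum.inl m)
    = if (m : ℕ) = 0 then ∑ l : Fin (N + 1), y (Sum.inl l)
      else (∑ l : Fin (N + 1), Gc g ((l : ℕ) + (m : ℕ)) * y (Sum.inl l)) - y (Sum.inr m) := by
  show ∑ j, ((Msys g).map (fun q : ℚ => (q : ℂ))) (Sum.inl m) j * y j = _
  rw [Fintype.sum_sum_type]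
  by_cases hm : (m : ℕ) = 0
  · rw [if_pos hm]
    simp [Msys, Matrix.map_apply, hm]
  · rw [if_neg hm]
    have h1 : (∑ l : Fin (N + 1),
        ((Msys g).map (fun q : ℚ => (q : ℂ))) (Sum.inl m) (Sum.inl l) * y (Sum.inl l))
        = ∑ l : Fin (N + 1), Gc g ((l : ℕ) + (m : ℕ)) * y (Sum.inl l) := by
      refine Finset.sum_congr rfl fun l _ => ?_
      simp only [Msys, Matrix.map_apply, if_neg hm]
      rfl
    have h2 : (∑ l : Fin (N + 1),
        ((Msys g).map (fun q : ℚ => (q : ℂ))) (Sum.inl m) (Sum.inr l) * y (Sum.inr l))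
        = -y (Sum.inr m) := by
      have hterm : ∀ l : Fin (N + 1),
          ((Msys g).map (fun q : ℚ => (q : ℂ))) (Sum.inl m) (Sum.inr l) * y (Sum.inr l)
          = if l = m then -y (Sum.inr l) else 0 := by
        intro l
        simp only [Msys, Matrix.map_apply, if_neg hm]
        by_cases hl : l = m <;> simp [hl]
      rw [Finset.sum_congr rfl fun l _ => hterm l, Finset.sum_ite_eq' Finset.univ m
        (fun l => -y (Sum.inr l)), if_pos (Finset.mem_univ m)]
    rw [h1, h2]
    ring

lemma row_inr {N : ℕ} (g : Fin N → ℚ) (y : (Fin (N + 1) ⊕ Fin (N + 1)) → ℂ) (m : Fin (N + 1)) :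
    ((Msys g).map (fun q : ℚ => (q : ℂ))).mulVec y (Sum.inr m)
    = if (m : ℕ) = 0 then ∑ l : Fin (N + 1), y (Sum.inr l)
      else y (Sum.inl m) + ∑ l : Fin (N + 1), Gc g ((l : ℕ) + (m : ℕ)) * y (Sum.inr l) := by
  show ∑ j, ((Msys g).map (fun q : ℚ => (q : ℂ))) (Sum.inr m) j * y j = _
  rw [Fintype.sum_sum_type]
  by_cases hm : (m : ℕ) = 0
  · rw [if_pos hm]
    simp [Msys, Matrix.map_apply, hm]
  · rw [if_neg hm]
    have h1 : (∑ l : Fin (N + 1),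
        ((Msys g).map (fun q : ℚ => (q : ℂ))) (Sum.inr m) (Sum.inl l) * y (Sum.inl l))
        = y (Sum.inl m) := by
      have hterm : ∀ l : Fin (N + 1),
          ((Msys g).map (fun q : ℚ => (q : ℂ))) (Sum.inr m) (Sum.inl l) * y (Sum.inl l)
          = if l = m then y (Sum.inl l) else 0 := by
        intro l
        simp only [Msys, Matrix.map_apply, if_neg hm]
        by_cases hl : l = m <;> simp [hl]
      rw [Finset.sum_congr rfl fun l _ => hterm l, Finset.sum_ite_eq' Finset.univ m
        (fun l => y (Sum.inl l)), if_pos (Finset.mem_univ m)]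
    have h2 : (∑ l : Fin (N + 1),
        ((Msys g).map (fun q : ℚ => (q : ℂ))) (Sum.inr m) (Sum.inr l) * y (Sum.inr l))
        = ∑ l : Fin (N + 1), Gc g ((l : ℕ) + (m : ℕ)) * y (Sum.inr l) := by
      refine Finset.sum_congr rfl fun l _ => ?_
      simp only [Msys, Matrix.map_apply, if_neg hm]
      rfl
    rw [h1, h2]

lemma conj_negI : (starRingEnd ℂ) (-Complex.I) ≠ -Complex.I := by
  rw [map_neg, Complex.conj_I, neg_neg]
  intro h
  have : (2 : ℂ) * Complex.I = 0 := by linear_combination h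
  rcases mul_eq_zero.mp this with h2 | h2
  · norm_num at h2
  · exact Complex.I_ne_zero h2

lemma conj_I_ne : (starRingEnd ℂ) (Complex.I) ≠ Complex.I := by
  rw [Complex.conj_I]
  intro h
  have : (2 : ℂ) * Complex.I = 0 := by linear_combination -h
  rcases mul_eq_zero.mp this with h2 | h2
  · norm_num at h2
  · exact Complex.I_ne_zero h2

lemma dPm {N : ℕ} (g : Fin N → ℚ) (a c : Fin (N + 1) → ℂ)
    (rel1 : ∀ m : Fin (N + 1), (m : ℕ) ≠ 0 →
      ∑ l : Fin (N + 1), Gc g ((l : ℕ) + (m : ℕ)) * a l = c m)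
    (rel2 : ∀ m : Fin (N + 1), (m : ℕ) ≠ 0 →
      ∑ l : Fin (N + 1), Gc g ((l : ℕ) + (m : ℕ)) * c l = -(a m)) :
    Pm g (-Complex.I) (fun m => a m + Complex.I * c m) ∧
    Pm g Complex.I (fun m => a m - Complex.I * c m) := by
  constructor <;> intro m hm
  · have : ∑ l : Fin (N + 1), Gc g ((l : ℕ) + (m : ℕ)) * (a l + Complex.I * c l)
        = (∑ l : Fin (N + 1), Gc g ((l : ℕ) + (m : ℕ)) * a l)
          + Complex.I * ∑ l : Fin (N + 1), Gc g ((l : ℕ) + (m : ℕ)) * c l := by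
      rw [Finset.mul_sum, ← Finset.sum_add_distrib]
      exact Finset.sum_congr rfl fun l _ => by ring
    rw [this, rel1 m hm, rel2 m hm]
    linear_combination (c m) * Complex.I_mul_I
  · have : ∑ l : Fin (N + 1), Gc g ((l : ℕ) + (m : ℕ)) * (a l - Complex.I * c l)
        = (∑ l : Fin (N + 1), Gc g ((l : ℕ) + (m : ℕ)) * a l)
          - Complex.I * ∑ l : Fin (N + 1), Gc g ((l : ℕ) + (m : ℕ)) * c l := by
      rw [Finset.mul_sum, ← Finset.sum_sub_distrib]
      exact Finset.sum_congr rfl fun l _ => by ring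
    rw [this, rel1 m hm, rel2 m hm]
    linear_combination (c m) * Complex.I_mul_I

/-- Corollary 2: if `φ ∈ P⁻_N` has rational coefficients, then the unique pair `α, β ∈ P⁺_N`
given by Theorem 1 has rational coefficients as well. -/
theorem daubechies_rational (N : ℕ) (hN : 1 ≤ N) (g : Fin N → ℚ)
    (hg : g ≠ 0) (a b : Fin (N + 1) → ℂ)
    (hunit : ∀ z : ℂ, z ≠ 0 →
      pEval a z * pTilde a z + pEval b z * pTilde b z = 1)
    (ha1 : pEval a 1 = 1) (hb1 : pEval b 1 = 0)
    (hpoly : ∀ i j : Fin 2, IsPolyFun (fun z =>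
      ((!![(1 : ℂ), 0; nEval (fun k => ((g k : ℚ) : ℂ)) z, 1] : Matrix (Fin 2) (Fin 2) ℂ) *
        !![pEval a z, pEval b z; -pTilde b z, pTilde a z]) i j)) :
    (∀ k : Fin (N + 1), ∃ q : ℚ, a k = (q : ℂ)) ∧
    (∀ k : Fin (N + 1), ∃ q : ℚ, b k = (q : ℂ)) := by
  classical
  have pTilde_neg : ∀ z : ℂ, pTilde (fun k => -(b k)) z = -pTilde b z := by
    intro z
    simp [pTilde, Finset.sum_neg_distrib]
  have h10 : IsPolyFun fun z => nEval (fun k => ((g k : ℚ) : ℂ)) z * pEval a z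
      + pTilde (fun k => -(b k)) z := by
    obtain ⟨p, hp⟩ := hpoly 1 0
    refine ⟨p, fun z hz => ?_⟩
    rw [← hp z hz]
    simp [Matrix.mul_apply, Fin.sum_univ_two, pTilde_neg z]
  have h11 : IsPolyFun fun z => nEval (fun k => ((g k : ℚ) : ℂ)) z * pEval b z
      + pTilde a z := by
    obtain ⟨p, hp⟩ := hpoly 1 1
    refine ⟨p, fun z hz => ?_⟩
    rw [← hp z hz]
    simp [Matrix.mul_apply, Fin.sum_univ_two]
  set c : Fin (N + 1) → ℂ := fun k => (starRingEnd ℂ) (b k) with hcdef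
  have rel1 : ∀ m : Fin (N + 1), (m : ℕ) ≠ 0 →
      ∑ l : Fin (N + 1), Gc g ((l : ℕ) + (m : ℕ)) * a l = c m := by
    intro m hm
    have h := extract g a (fun k => -(b k)) h10 m hm
    rw [map_neg, neg_neg] at h
    exact h
  have rel2 : ∀ m : Fin (N + 1), (m : ℕ) ≠ 0 →
      ∑ l : Fin (N + 1), Gc g ((l : ℕ) + (m : ℕ)) * c l = -(a m) := by
    intro m hm
    have h := congrArg (starRingEnd ℂ) (extract g b a h11 m hm)
    rw [map_sum, map_neg, Complex.conj_conj] at h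
    rw [← h]
    refine Finset.sum_congr rfl fun l _ => ?_
    rw [_root_.map_mul, Gc_conj]
  have hsa : ∑ l : Fin (N + 1), a l = 1 := by simpa [pEval] using ha1
  have hsb : ∑ l : Fin (N + 1), b l = 0 := by simpa [pEval] using hb1
  have hsc : ∑ l : Fin (N + 1), c l = 0 := by
    have := congrArg (starRingEnd ℂ) hsb
    rw [map_sum, map_zero] at this
    exact this
  -- the solution of the rational linear system
  have hsol : ((Msys g).map (fun q : ℚ => (q : ℂ))).mulVec (Sum.elim a c)
      = fun i => ((Esys i : ℚ) : ℂ) := by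
    funext i
    rcases i with m | m
    · rw [row_inl]
      by_cases hm : (m : ℕ) = 0
      · rw [if_pos hm]
        simp only [Esys, if_pos hm, Sum.elim_inl]
        rw [hsa]
        norm_num
      · rw [if_neg hm]
        simp only [Esys, if_neg hm, Sum.elim_inl, Sum.elim_inr]
        rw [show (((0:ℚ)):ℂ) = 0 by norm_num, sub_eq_zero]
        exact rel1 m hm
    · rw [row_inr]
      by_cases hm : (m : ℕ) = 0
      · rw [if_pos hm]
        simp only [Esys, if_pos hm, Sum.elim_inr]
        rw [hsc]
        norm_num
      · rw [if_neg hm]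
        simp only [Esys, if_neg hm, Sum.elim_inl, Sum.elim_inr]
        rw [rel2 m hm]
        norm_num
  -- Pm data for the actual solution
  have hPm := dPm g a c rel1 rel2
  have hsd : ∑ m : Fin (N + 1), (a m + Complex.I * c m) = 1 := by
    rw [Finset.sum_add_distrib, ← Finset.mul_sum, hsa, hsc]
    ring
  have hse : ∑ m : Fin (N + 1), (a m - Complex.I * c m) = 1 := by
    rw [Finset.sum_sub_distrib, ← Finset.mul_sum, hsa, hsc]
    ring
  -- trivial kernel over ℂ
  have hker : ∀ y : (Fin (N + 1) ⊕ Fin (N + 1)) → ℂ,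
      ((Msys g).map (fun q : ℚ => (q : ℂ))).mulVec y = 0 → y = 0 := by
    intro y hy
    set a' : Fin (N + 1) → ℂ := fun m => y (Sum.inl m) with ha'def
    set c' : Fin (N + 1) → ℂ := fun m => y (Sum.inr m) with hc'def
    have ra1 : ∀ m : Fin (N + 1), (m : ℕ) ≠ 0 →
        ∑ l : Fin (N + 1), Gc g ((l : ℕ) + (m : ℕ)) * a' l = c' m := by
      intro m hm
      have h := congrFun hy (Sum.inl m)
      rw [row_inl, if_neg hm] at h
      simp only [Pi.zero_apply] at h
      rw [sub_eq_zero] at h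
      exact h
    have ra2 : ∀ m : Fin (N + 1), (m : ℕ) ≠ 0 →
        ∑ l : Fin (N + 1), Gc g ((l : ℕ) + (m : ℕ)) * c' l = -(a' m) := by
      intro m hm
      have h := congrFun hy (Sum.inr m)
      rw [row_inr, if_neg hm] at h
      simp only [Pi.zero_apply] at h
      linear_combination h
    have hsa' : ∑ l : Fin (N + 1), a' l = 0 := by
      have h := congrFun hy (Sum.inl 0)
      rw [row_inl, if_pos (by simp)] at h
      simpa using h
    have hsc' : ∑ l : Fin (N + 1), c' l = 0 := by
      have h := congrFun hy (Sum.inr 0)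
      rw [row_inr, if_pos (by simp)] at h
      simpa using h
    have hPm' := dPm g a' c' ra1 ra2
    have hsd' : ∑ m : Fin (N + 1), (a' m + Complex.I * c' m) = 0 := by
      rw [Finset.sum_add_distrib, ← Finset.mul_sum, hsa', hsc']
      ring
    have hse' : ∑ m : Fin (N + 1), (a' m - Complex.I * c' m) = 0 := by
      rw [Finset.sum_sub_distrib, ← Finset.mul_sum, hsa', hsc']
      ring
    have hd' := uniquePm g (-Complex.I) conj_negI _ hPm.1 hsd _ hPm'.1 hsd'
    have he' := uniquePm g Complex.I conj_I_ne _ hPm.2 hse _ hPm'.2 hse'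
    funext i
    rcases i with m | m
    · have h1 := congrFun hd' m
      have h2 := congrFun he' m
      simp only [Pi.zero_apply] at h1 h2
      show a' m = 0
      linear_combination (h1 + h2) / 2
    · have h1 := congrFun hd' m
      have h2 := congrFun he' m
      simp only [Pi.zero_apply] at h1 h2
      have h3 : (2 : ℂ) * Complex.I * c' m = 0 := by linear_combination h1 - h2
      have h4 : (2 : ℂ) * Complex.I ≠ 0 :=
        mul_ne_zero two_ne_zero Complex.I_ne_zero
      show c' m = 0
      exact (mul_eq_zero.mp h3).resolve_left h4
  -- cast computation
  have hcast : ∀ (q : (Fin (N + 1) ⊕ Fin (N + 1)) → ℚ) i,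
      ((Msys g).map (fun x : ℚ => (x : ℂ))).mulVec (fun j => (q j : ℂ)) i
      = (((Msys g).mulVec q) i : ℂ) := by
    intro q i
    show (∑ j, ((Msys g) i j : ℂ) * (q j : ℂ)) = (((Msys g).mulVec q) i : ℂ)
    rw [show ((Msys g).mulVec q) i = ∑ j, (Msys g) i j * q j from rfl]
    push_cast
    rfl
  -- injectivity over ℚ, hence surjectivity
  have hkerQ : ∀ q : (Fin (N + 1) ⊕ Fin (N + 1)) → ℚ, (Msys g).mulVec q = 0 → q = 0 := by
    intro q hq
    have hz : ((Msys g).map (fun x : ℚ => (x : ℂ))).mulVec (fun j => (q j : ℂ)) = 0 := by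
      funext i
      rw [hcast q i, congrFun hq i]
      simp
    have := hker _ hz
    funext i
    have h := congrFun this i
    simp only [Pi.zero_apply] at h
    exact_mod_cast h
  have hinj : Function.Injective ((Msys g).mulVecLin) := by
    rw [injective_iff_map_eq_zero]
    intro q hq
    exact hkerQ q (by rw [← Matrix.mulVecLin_apply]; exact hq)
  obtain ⟨q, hq⟩ := LinearMap.injective_iff_surjective.mp hinj Esys
  rw [Matrix.mulVecLin_apply] at hq
  -- identify the complex solution with the rational one
  have hqc : ((Msys g).map (fun x : ℚ => (x : ℂ))).mulVec (fun j => (q j : ℂ))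
      = fun i => ((Esys i : ℚ) : ℂ) := by
    funext i
    rw [hcast q i, hq]
  have hdiff : ((Msys g).map (fun x : ℚ => (x : ℂ))).mulVec
      (Sum.elim a c - fun j => (q j : ℂ)) = 0 := by
    rw [Matrix.mulVec_sub, hsol, hqc]
    simp
  have hfin := hker _ hdiff
  have hxq : ∀ i, Sum.elim a c i = (q i : ℂ) := by
    intro i
    have := congrFun hfin i
    simpa [sub_eq_zero] using this
  refine ⟨fun k => ⟨q (Sum.inl k), hxq (Sum.inl k)⟩, fun k => ⟨q (Sum.inr k), ?_⟩⟩
  have hck : c k = (q (Sum.inr k) : ℂ) := hxq (Sum.inr k)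
  have hbk : b k = (starRingEnd ℂ) (c k) := by
    rw [hcdef]
    simp
  rw [hbk, hck]
  exact map_ratCast _ _
end

section
/- Let N ≥ 1 and let α, β ∈ P^+_N satisfy α(z)α̃(z) + β(z)β̃(z) = 1 on ℂ\{0} and |α(0)| + |β(0)| > 0. Then there exists a unique φ ∈ P^-_N such that all entries of [[1,0],[φ,1]]·[[α,β],[-β̃,α̃]] contain only nonnegative powers of z. -/
open Complex Finset Matrix

open Polynomial

noncomputable def pPoly {N : ℕ} (a : Fin (N + 1) → ℂ) : Polynomial ℂ :=
  ∑ k : Fin (N + 1), C (a k) * X ^ (k : ℕ)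
noncomputable def tPoly {N : ℕ} (a : Fin (N + 1) → ℂ) : Polynomial ℂ :=
  ∑ k : Fin (N + 1), C ((starRingEnd ℂ) (a k)) * X ^ (N - (k : ℕ))
noncomputable def gPoly {N : ℕ} (g : Fin N → ℂ) : Polynomial ℂ :=
  ∑ k : Fin N, C (g k) * X ^ (N - 1 - (k : ℕ))

lemma pPoly_eval {N : ℕ} (a : Fin (N + 1) → ℂ) (z : ℂ) :
    (pPoly a).eval z = pEval a z := by
  simp [pPoly, pEval, eval_finset_sum]

lemma tPoly_eval {N : ℕ} (a : Fin (N + 1) → ℂ) (z : ℂ) (hz : z ≠ 0) :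
    (tPoly a).eval z = z ^ N * pTilde a z := by
  rw [tPoly, pTilde, eval_finset_sum, Finset.mul_sum]
  refine Finset.sum_congr rfl fun k _ => ?_
  rw [eval_mul, eval_C, eval_pow, eval_X, pow_sub₀ z hz k.is_le, inv_pow]
  ring

lemma gPoly_eval {N : ℕ} (g : Fin N → ℂ) (z : ℂ) (hz : z ≠ 0) :
    (gPoly g).eval z = z ^ N * nEval g z := by
  rw [gPoly, nEval, eval_finset_sum, Finset.mul_sum]
  refine Finset.sum_congr rfl fun k _ => ?_
  rw [eval_mul, eval_C, eval_pow, eval_X]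
  have h1 : N - 1 - (k : ℕ) = N - ((k : ℕ) + 1) := by omega
  rw [h1, pow_sub₀ z hz (by omega : (k : ℕ) + 1 ≤ N), inv_pow]
  ring

lemma gPoly_degree {N : ℕ} (g : Fin N → ℂ) : (gPoly g).degree < (N : ℕ) := by
  refine lt_of_le_of_lt (Polynomial.degree_sum_le _ _) ?_
  rw [Finset.sup_lt_iff (by exact_mod_cast WithBot.bot_lt_coe N)]
  intro k _
  refine lt_of_le_of_lt (Polynomial.degree_C_mul_X_pow_le _ _) ?_
  exact_mod_cast (by omega : N - 1 - (k : ℕ) < N)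

lemma gPoly_coeff {N : ℕ} (g : Fin N → ℂ) (k : Fin N) :
    (gPoly g).coeff (N - 1 - (k : ℕ)) = g k := by
  rw [gPoly, Polynomial.finset_sum_coeff]
  rw [Finset.sum_eq_single k]
  · simp
  · intro j _ hj
    have : ¬ (N - 1 - (k : ℕ) = N - 1 - (j : ℕ)) := by
      have := j.isLt; have := k.isLt
      intro h; exact hj (Fin.ext (by omega))
    simp [coeff_C_mul, coeff_X_pow, this]
  · simp

lemma gPoly_inj {N : ℕ} {g g' : Fin N → ℂ} (h : gPoly g = gPoly g') : g = g' := by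
  funext k
  rw [← gPoly_coeff g k, ← gPoly_coeff g' k, h]

lemma gPoly_surj {N : ℕ} (G : Polynomial ℂ) (hG : G.degree < (N : ℕ)) :
    gPoly (fun k : Fin N => G.coeff (N - 1 - (k : ℕ))) = G := by
  ext n
  by_cases hn : n < N
  · have hk : N - 1 - n < N := by omega
    rw [gPoly, Polynomial.finset_sum_coeff, Finset.sum_eq_single (⟨N - 1 - n, hk⟩ : Fin N)]
    · simp only [coeff_C_mul, coeff_X_pow]
      have : N - 1 - (N - 1 - n) = n := by omega
      simp [this]
    · intro j _ hj
      have hj' : (j : ℕ) ≠ N - 1 - n := fun h => hj (Fin.ext h)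
      have : ¬ (n = N - 1 - (j : ℕ)) := by have := j.isLt; omega
      simp [coeff_C_mul, coeff_X_pow, this]
    · simp
  · rw [Polynomial.coeff_eq_zero_of_degree_lt
      (lt_of_lt_of_le hG (by exact_mod_cast (by omega : N ≤ n)))]
    rw [gPoly, Polynomial.finset_sum_coeff]
    refine Finset.sum_eq_zero fun j _ => ?_
    have : ¬ (n = N - 1 - (j : ℕ)) := by have := j.isLt; omega
    simp [coeff_C_mul, coeff_X_pow, this]

lemma ne_zero_infinite : {z : ℂ | z ≠ 0}.Infinite := by
  exact Set.Finite.infinite_compl (Set.finite_singleton (0 : ℂ))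

lemma poly_eq_of_ne_zero {p q : Polynomial ℂ} (h : ∀ z : ℂ, z ≠ 0 → p.eval z = q.eval z) :
    p = q := by
  refine Polynomial.eq_of_infinite_eval_eq p q (Set.Infinite.mono ?_ ne_zero_infinite)
  intro z hz; exact h z hz

lemma isPolyFun_iff {N : ℕ} (f : ℂ → ℂ) (q : Polynomial ℂ)
    (h : ∀ z : ℂ, z ≠ 0 → z ^ N * f z = q.eval z) :
    IsPolyFun f ↔ (X ^ N ∣ q) := by
  constructor
  · rintro ⟨p, hp⟩
    refine ⟨p, poly_eq_of_ne_zero fun z hz => ?_⟩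
    rw [← h z hz, hp z hz]; simp
  · rintro ⟨c, hc⟩
    refine ⟨c, fun z hz => ?_⟩
    have h2 := h z hz
    rw [hc, eval_mul, eval_pow, eval_X] at h2
    exact mul_left_cancel₀ (pow_ne_zero N hz) h2

lemma core (N : ℕ) (pa pb A B : Polynomial ℂ)
    (hkey : pa * A + pb * B = X ^ N)
    (ha : pa.eval 0 ≠ 0) :
    ∃ G : Polynomial ℂ, G.degree < (N : ℕ) ∧ (X ^ N ∣ G * pa - B) ∧ (X ^ N ∣ G * pb + A) ∧
      ∀ G' : Polynomial ℂ, G'.degree < (N : ℕ) → (X ^ N ∣ G' * pa - B) → G' = G := by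
  have hXpa : ¬ ((X : Polynomial ℂ) ∣ pa) := by
    rw [Polynomial.X_dvd_iff]
    rwa [Polynomial.coeff_zero_eq_eval_zero]
  have hcop : IsCoprime ((X : Polynomial ℂ) ^ N) pa :=
    IsCoprime.pow_left ((Polynomial.irreducible_X.coprime_iff_not_dvd).mpr hXpa)
  obtain ⟨u, v, huv⟩ := hcop
  have hcop : IsCoprime ((X : Polynomial ℂ) ^ N) pa := ⟨u, v, huv⟩
  set G0 : Polynomial ℂ := v * B with hG0
  set G : Polynomial ℂ := G0 %ₘ (X ^ N) with hGdef
  have hmonic : ((X : Polynomial ℂ) ^ N).Monic := Polynomial.monic_X_pow N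
  have hdegXN : ((X : Polynomial ℂ) ^ N).degree = (N : ℕ) := Polynomial.degree_X_pow N
  have hdeg : G.degree < (N : ℕ) := by
    rw [← hdegXN]; exact Polynomial.degree_modByMonic_lt G0 hmonic
  have hdiv0 : (X : Polynomial ℂ) ^ N ∣ G0 - G := by
    refine ⟨G0 /ₘ (X ^ N), ?_⟩
    rw [hGdef, Polynomial.modByMonic_eq_sub_mul_div G0 (X ^ N)]; ring
  have key1 : (X : Polynomial ℂ) ^ N ∣ G0 * pa - B := by
    refine ⟨-(B * u), ?_⟩
    rw [hG0]; linear_combination B * huv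
  have hdvd1 : (X : Polynomial ℂ) ^ N ∣ G * pa - B := by
    have heq : G * pa - B = (G0 * pa - B) - (G0 - G) * pa := by ring
    rw [heq]
    exact dvd_sub key1 (hdiv0.mul_right pa)
  have hdvd2 : (X : Polynomial ℂ) ^ N ∣ G * pb + A := by
    have h3 : (X : Polynomial ℂ) ^ N ∣ pa * (G * pb + A) := by
      have heq : pa * (G * pb + A) = (G * pa - B) * pb + (X ^ N) := by
        rw [← hkey]; ring
      rw [heq]
      exact dvd_add (hdvd1.mul_right pb) dvd_rfl
    exact hcop.dvd_of_dvd_mul_left h3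
  refine ⟨G, hdeg, hdvd1, hdvd2, fun G' hdeg' hdvd' => ?_⟩
  have hd : (X : Polynomial ℂ) ^ N ∣ (G' - G) * pa := by
    have heq : (G' - G) * pa = (G' * pa - B) - (G * pa - B) := by ring
    rw [heq]; exact dvd_sub hdvd' hdvd1
  have hd2 : (X : Polynomial ℂ) ^ N ∣ G' - G := hcop.dvd_of_dvd_mul_right hd
  have : G' - G = 0 := by
    refine Polynomial.eq_zero_of_dvd_of_degree_lt hd2 ?_
    rw [hdegXN]
    exact lt_of_le_of_lt (Polynomial.degree_sub_le _ _) (max_lt hdeg' hdeg)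
  exact sub_eq_zero.mp this

lemma entry_iff {N : ℕ} (a b : Fin (N + 1) → ℂ) (g : Fin N → ℂ) :
    (∀ i j : Fin 2, IsPolyFun (fun z =>
      ((!![(1 : ℂ), 0; nEval g z, 1] : Matrix (Fin 2) (Fin 2) ℂ) *
        !![pEval a z, pEval b z; -pTilde b z, pTilde a z]) i j)) ↔
    ((X ^ N ∣ gPoly g * pPoly a - tPoly b) ∧ (X ^ N ∣ gPoly g * pPoly b + tPoly a)) := by
  have hmat : ∀ z : ℂ,
      ((!![(1 : ℂ), 0; nEval g z, 1] : Matrix (Fin 2) (Fin 2) ℂ) *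
        !![pEval a z, pEval b z; -pTilde b z, pTilde a z]) =
      !![pEval a z, pEval b z;
         nEval g z * pEval a z - pTilde b z, nEval g z * pEval b z + pTilde a z] := by
    intro z
    rw [Matrix.mul_fin_two]
    ext i j
    fin_cases i <;> fin_cases j <;> simp <;> ring
  have he10 : ∀ z : ℂ, z ≠ 0 →
      z ^ N * (nEval g z * pEval a z - pTilde b z) = (gPoly g * pPoly a - tPoly b).eval z := by
    intro z hz
    rw [eval_sub, eval_mul, gPoly_eval g z hz, pPoly_eval, tPoly_eval b z hz]
    ring
  have he11 : ∀ z : ℂ, z ≠ 0 →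
      z ^ N * (nEval g z * pEval b z + pTilde a z) = (gPoly g * pPoly b + tPoly a).eval z := by
    intro z hz
    rw [eval_add, eval_mul, gPoly_eval g z hz, pPoly_eval, tPoly_eval a z hz]
    ring
  constructor
  · intro h
    constructor
    · rw [← isPolyFun_iff _ _ he10]
      have h10 := h 1 0
      convert h10 using 2 with z
      rw [hmat z]; simp
    · rw [← isPolyFun_iff _ _ he11]
      have h11 := h 1 1
      convert h11 using 2 with z
      rw [hmat z]; simp
  · rintro ⟨h1, h2⟩ i j
    have hfun : (fun z => ((!![(1 : ℂ), 0; nEval g z, 1] : Matrix (Fin 2) (Fin 2) ℂ) *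
        !![pEval a z, pEval b z; -pTilde b z, pTilde a z]) i j) =
        (fun z => (!![pEval a z, pEval b z;
         nEval g z * pEval a z - pTilde b z, nEval g z * pEval b z + pTilde a z]
          : Matrix (Fin 2) (Fin 2) ℂ) i j) := by
      funext z; rw [hmat z]
    rw [hfun]
    fin_cases i <;> fin_cases j
    · exact ⟨pPoly a, fun z _ => by simp [pPoly_eval]⟩
    · exact ⟨pPoly b, fun z _ => by simp [pPoly_eval]⟩
    · have := (isPolyFun_iff _ _ he10).mpr h1
      convert this using 2 with z
      try simp
    · have := (isPolyFun_iff _ _ he11).mpr h2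
      convert this using 2 with z
      try simp

lemma key_poly {N : ℕ} (a b : Fin (N + 1) → ℂ)
    (hunit : ∀ z : ℂ, z ≠ 0 →
      pEval a z * pTilde a z + pEval b z * pTilde b z = 1) :
    pPoly a * tPoly a + pPoly b * tPoly b = X ^ N := by
  apply poly_eq_of_ne_zero
  intro z hz
  rw [eval_add, eval_mul, eval_mul, eval_pow, eval_X, pPoly_eval, pPoly_eval,
    tPoly_eval a z hz, tPoly_eval b z hz]
  linear_combination (z ^ N) * (hunit z hz)

/-- Theorem 2: for any `α, β ∈ P⁺_N` with `α α̃ + β β̃ = 1` on `ℂ \ {0}` and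
`|α(0)| + |β(0)| > 0`, there exists a unique `φ ∈ P⁻_N` such that all entries of
`[[1,0],[φ,1]]·[[α,β],[-β̃,α̃]]` contain only nonnegative powers of `z`. -/
theorem daubechies_theorem2 (N : ℕ) (hN : 1 ≤ N) (a b : Fin (N + 1) → ℂ)
    (hunit : ∀ z : ℂ, z ≠ 0 →
      pEval a z * pTilde a z + pEval b z * pTilde b z = 1)
    (h0 : 0 < ‖pEval a 0‖ + ‖pEval b 0‖) :
    ∃! g : Fin N → ℂ, ∀ i j : Fin 2, IsPolyFun (fun z =>
      ((!![(1 : ℂ), 0; nEval g z, 1] : Matrix (Fin 2) (Fin 2) ℂ) *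
        !![pEval a z, pEval b z; -pTilde b z, pTilde a z]) i j) := by
  have hkey := key_poly a b hunit
  have hab : pEval a 0 ≠ 0 ∨ pEval b 0 ≠ 0 := by
    by_contra h
    push_neg at h
    rw [h.1, h.2] at h0
    simp at h0
  rcases hab with ha | hb
  · obtain ⟨G, hdeg, hdvd1, hdvd2, huniq⟩ :=
      core N (pPoly a) (pPoly b) (tPoly a) (tPoly b) hkey (by rwa [pPoly_eval])
    refine ⟨fun k => G.coeff (N - 1 - (k : ℕ)), ?_, ?_⟩
    · exact (entry_iff a b _).mpr (by rw [gPoly_surj G hdeg]; exact ⟨hdvd1, hdvd2⟩)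
    · intro g' hg'
      have hg2 := (entry_iff a b g').mp hg'
      have hG' := huniq (gPoly g') (gPoly_degree g') hg2.1
      apply gPoly_inj
      rw [hG', gPoly_surj G hdeg]
  · obtain ⟨G, hdeg, hdvd1, hdvd2, huniq⟩ :=
      core N (pPoly b) (-pPoly a) (tPoly b) (-tPoly a)
        (by linear_combination hkey) (by rwa [pPoly_eval])
    have hc1 : (X : Polynomial ℂ) ^ N ∣ G * pPoly a - tPoly b := by
      have heq : G * pPoly a - tPoly b = -(G * (-pPoly a) + tPoly b) := by ring
      rw [heq]
      exact dvd_neg.mpr hdvd2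
    have hc2 : (X : Polynomial ℂ) ^ N ∣ G * pPoly b + tPoly a := by
      have heq : G * pPoly b + tPoly a = G * pPoly b - (-tPoly a) := by ring
      rw [← heq] at hdvd1
      exact hdvd1
    refine ⟨fun k => G.coeff (N - 1 - (k : ℕ)), ?_, ?_⟩
    · exact (entry_iff a b _).mpr (by rw [gPoly_surj G hdeg]; exact ⟨hc1, hc2⟩)
    · intro g' hg'
      have hg2 := (entry_iff a b g').mp hg'
      have hd : (X : Polynomial ℂ) ^ N ∣ gPoly g' * pPoly b - (-tPoly a) := by
        have heq : gPoly g' * pPoly b - (-tPoly a) = gPoly g' * pPoly b + tPoly a := by ring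
        rw [heq]; exact hg2.2
      have hG' := huniq (gPoly g') (gPoly_degree g') hd
      apply gPoly_inj
      rw [hG', gPoly_surj G hdeg]
end

section
/- Let α, β ∈ P^+_N satisfy αα̃ + ββ̃ = 1 on ℂ\{0} and α(0) ≠ 0. Let f(z) = β̃(z)/α(z) in a deleted neighborhood of 0, and let φ(z) = [f(z)]^- be the sum of the negative-power terms of the Laurent expansion of f around 0. Then φ ∈ P^-_N (the negative part has degree at most N) and both φα - β̃ and φβ + α̃ are polynomials in nonnegative powers of z. -/
open Complex Finset Matrix

open Topology

open Polynomial in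
/-- `pEval` as a polynomial evaluation. -/
lemma pEval_eq_eval {N : ℕ} (a : Fin (N + 1) → ℂ) (z : ℂ) :
    pEval a z = (∑ k : Fin (N + 1), C (a k) * X ^ (k : ℕ)).eval z := by
  simp [pEval, eval_finset_sum]

open Polynomial in
/-- `pTilde` as a polynomial evaluation times `z⁻¹ ^ N`. -/
lemma pTilde_eq_eval {N : ℕ} (a : Fin (N + 1) → ℂ) {z : ℂ} (hz : z ≠ 0) :
    pTilde a z
      = (∑ k : Fin (N + 1), C ((starRingEnd ℂ) (a k)) * X ^ (N - (k : ℕ))).eval z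
        * (z⁻¹) ^ N := by
  rw [eval_finset_sum, Finset.sum_mul]
  refine Finset.sum_congr rfl fun k _ => ?_
  have hk : (k : ℕ) ≤ N := Nat.lt_succ_iff.mp k.isLt
  simp only [eval_mul, eval_C, eval_pow, eval_X, mul_assoc]
  congr 1
  rw [pow_sub₀ z hz hk, inv_pow]
  field_simp
  rw [one_div, ← mul_pow, mul_inv_cancel₀ hz, one_pow]

/-- If `α(0) ≠ 0`, then the principal part `φ = [β̃/α]⁻` of `f = β̃/α` at `0` is a Laurent
polynomial in `z⁻¹, …, z⁻ᴺ`, and `φα - β̃` and `φβ + α̃` have only nonnegative powers. -/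
theorem daubechies_principal_part (N : ℕ) (a b : Fin (N + 1) → ℂ)
    (hunit : ∀ z : ℂ, z ≠ 0 →
      pEval a z * pTilde a z + pEval b z * pTilde b z = 1)
    (ha0 : pEval a 0 ≠ 0) :
    ∃ g : Fin N → ℂ,
      (∃ F : ℂ → ℂ, AnalyticAt ℂ F 0 ∧
        ∀ᶠ z in 𝓝[≠] (0 : ℂ), pTilde b z / pEval a z = nEval g z + F z) ∧
      IsPolyFun (fun z => nEval g z * pEval a z - pTilde b z) ∧
      IsPolyFun (fun z => nEval g z * pEval b z + pTilde a z) := by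
  classical
  set pa : Polynomial ℂ := ∑ k : Fin (N + 1), Polynomial.C (a k) * Polynomial.X ^ (k : ℕ)
    with hpa_def
  set pb : Polynomial ℂ := ∑ k : Fin (N + 1), Polynomial.C (b k) * Polynomial.X ^ (k : ℕ)
    with hpb_def
  set qa : Polynomial ℂ :=
    ∑ k : Fin (N + 1), Polynomial.C ((starRingEnd ℂ) (a k)) * Polynomial.X ^ (N - (k : ℕ))
    with hqa_def
  set qb : Polynomial ℂ :=
    ∑ k : Fin (N + 1), Polynomial.C ((starRingEnd ℂ) (b k)) * Polynomial.X ^ (N - (k : ℕ))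
    with hqb_def
  have hpaev : ∀ z, pEval a z = pa.eval z := fun z => pEval_eq_eval a z
  have hpbev : ∀ z, pEval b z = pb.eval z := fun z => pEval_eq_eval b z
  have hqaev : ∀ z : ℂ, z ≠ 0 → pTilde a z = qa.eval z * (z⁻¹) ^ N :=
    fun z hz => pTilde_eq_eval a hz
  have hqbev : ∀ z : ℂ, z ≠ 0 → pTilde b z = qb.eval z * (z⁻¹) ^ N :=
    fun z hz => pTilde_eq_eval b hz
  have ha0' : pa.eval 0 ≠ 0 := by rw [← hpaev]; exact ha0
  -- polynomial form of the unit relation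
  have hpoly : pa * qa + pb * qb = Polynomial.X ^ N := by
    apply Polynomial.eq_of_infinite_eval_eq
    apply Set.Infinite.mono (s := {(0 : ℂ)}ᶜ)
    · intro z hz
      have hz' : z ≠ 0 := hz
      have h1 := hunit z hz'
      rw [hpaev, hpbev, hqaev z hz', hqbev z hz'] at h1
      simp only [Set.mem_setOf_eq, Polynomial.eval_add, Polynomial.eval_mul,
        Polynomial.eval_pow, Polynomial.eval_X]
      field_simp at h1
      rw [one_div, inv_pow, inv_mul_eq_iff_eq_mul₀ (pow_ne_zero _ hz'), mul_one] at h1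
      exact h1
    · exact Set.Finite.infinite_compl (Set.finite_singleton 0)
  -- coprimality of `X ^ N` and `pa`
  have hc0 : pa.coeff 0 ≠ 0 := by
    rwa [Polynomial.coeff_zero_eq_eval_zero]
  have hcopX : IsCoprime (Polynomial.X : Polynomial ℂ) pa := by
    have hdvd : Polynomial.X ∣ (Polynomial.C (pa.coeff 0)⁻¹ * pa - 1) := by
      rw [Polynomial.X_dvd_iff]
      simp [Polynomial.coeff_C_mul, inv_mul_cancel₀ hc0]
    obtain ⟨w, hw⟩ := hdvd
    exact ⟨-w, Polynomial.C (pa.coeff 0)⁻¹, by linear_combination hw⟩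
  have hcop : IsCoprime ((Polynomial.X : Polynomial ℂ) ^ N) pa := hcopX.pow_left
  obtain ⟨u, v, huv⟩ := id hcop
  -- division with remainder
  set P : Polynomial ℂ := (qb * v) %ₘ (Polynomial.X ^ N) with hP_def
  set d : Polynomial ℂ := (qb * v) /ₘ (Polynomial.X ^ N) with hd_def
  have hmd : P + Polynomial.X ^ N * d = qb * v :=
    Polynomial.modByMonic_add_div (qb * v) (Polynomial.X ^ N)
  have hPdeg : P.degree < (N : ℕ) := by
    have := Polynomial.degree_modByMonic_lt (qb * v) (Polynomial.monic_X_pow (R := ℂ) N)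
    simpa [Polynomial.degree_X_pow] using this
  set s : Polynomial ℂ := qb * u + d * pa with hs_def
  have hq : qb = P * pa + Polynomial.X ^ N * s := by
    rw [hs_def]
    linear_combination (-qb) * huv - pa * hmd
  -- the coefficients of the principal part
  set g : Fin N → ℂ := fun k => P.coeff (N - 1 - (k : ℕ)) with hg_def
  have hnEval : ∀ z : ℂ, z ≠ 0 → nEval g z = P.eval z * (z⁻¹) ^ N := by
    intro z hz
    have hPev : P.eval z = ∑ j ∈ Finset.range N, P.coeff j * z ^ j := by
      by_cases hP : P = 0
      · simp [hP]
      · have hnd : P.natDegree < N := by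
          exact (Polynomial.natDegree_lt_iff_degree_lt hP).mpr hPdeg
        exact Polynomial.eval_eq_sum_range' hnd z
    have hfin : nEval g z = ∑ k ∈ Finset.range N, P.coeff (N - 1 - k) * z⁻¹ ^ (k + 1) :=
      Fin.sum_univ_eq_sum_range (fun k => P.coeff (N - 1 - k) * z⁻¹ ^ (k + 1)) N
    rw [hPev, Finset.sum_mul, hfin]
    rw [← Finset.sum_range_reflect (fun j => P.coeff j * z ^ j * z⁻¹ ^ N) N]
    refine Finset.sum_congr rfl fun k hk => ?_
    have hkN : k < N := Finset.mem_range.mp hk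
    have hexp : z⁻¹ ^ (k + 1) = z ^ (N - 1 - k) * z⁻¹ ^ N := by
      have h2 : z⁻¹ ^ N = z⁻¹ ^ (k + 1) * z⁻¹ ^ (N - 1 - k) := by
        rw [← pow_add]; congr 1; omega
      rw [h2, mul_left_comm, inv_pow z (N - 1 - k),
        mul_inv_cancel₀ (pow_ne_zero _ hz), mul_one]
    rw [hexp]
    ring
  -- the polynomial identities
  have key2 : pa * (P * pb + qa) = Polynomial.X ^ N * (1 - s * pb) := by
    linear_combination (-pb) * hq + hpoly
  have hdvd2 : (Polynomial.X : Polynomial ℂ) ^ N ∣ (P * pb + qa) :=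
    hcop.dvd_of_dvd_mul_left ⟨1 - s * pb, key2⟩
  obtain ⟨t, ht⟩ := hdvd2
  refine ⟨g, ⟨fun z => s.eval z / pa.eval z, ?_, ?_⟩, ⟨-s, ?_⟩, ⟨t, ?_⟩⟩
  · exact ((analyticAt_id.aeval_polynomial s).congr (by
      filter_upwards with z; simp [Polynomial.aeval_def])).div
      ((analyticAt_id.aeval_polynomial pa).congr (by
        filter_upwards with z; simp [Polynomial.aeval_def])) ha0'
  · have hne : ∀ᶠ z in 𝓝 (0 : ℂ), pa.eval z ≠ 0 :=
      (pa.continuous.continuousAt).eventually_ne ha0'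
    filter_upwards [self_mem_nhdsWithin, eventually_nhdsWithin_of_eventually_nhds hne]
      with z hz hpaz
    have hz' : z ≠ 0 := hz
    have he : qb.eval z = P.eval z * pa.eval z + z ^ N * s.eval z := by
      have := congrArg (Polynomial.eval z) hq
      simpa using this
    rw [hqbev z hz', hpaev, hnEval z hz', he]
    field_simp
    have h1z : z ^ N * (1 / z) ^ N = 1 := by rw [← mul_pow, mul_one_div_cancel hz', one_pow]
    linear_combination (Polynomial.eval z s) * h1z
  · intro z hz
    have he : qb.eval z = P.eval z * pa.eval z + z ^ N * s.eval z := by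
      have := congrArg (Polynomial.eval z) hq
      simpa using this
    simp only
    rw [hqbev z hz, hpaev, hnEval z hz, he, Polynomial.eval_neg]
    field_simp
    have h1z : z ^ N * (1 / z) ^ N = 1 := by rw [← mul_pow, mul_one_div_cancel hz, one_pow]
    linear_combination (-Polynomial.eval z s) * h1z
  · intro z hz
    have he : P.eval z * pb.eval z + qa.eval z = z ^ N * t.eval z := by
      have := congrArg (Polynomial.eval z) ht
      simpa using this
    simp only
    rw [hqaev z hz, hpbev, hnEval z hz]
    have hzn : z ^ N ≠ 0 := pow_ne_zero _ hz
    have : (P.eval z * pb.eval z + qa.eval z) * (z⁻¹) ^ N = t.eval z := by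
      rw [he, inv_pow]
      field_simp
    linear_combination this
end

section
/- Let α, β ∈ P^+_N satisfy αα̃ + ββ̃ = 1 on ℂ\{0}, and suppose α_0, β_0 are polynomials with α α_0 + β β_0 = 1 (a Bézout relation). If φ ∈ P^- is any Laurent polynomial with only negative powers such that φα - β̃ and φβ + α̃ have only nonnegative powers of z, then φ = [α_0 β̃ - β_0 α̃]^-, i.e., φ equals the negative-power part of α_0 β̃ - β_0 α̃. In particular, such φ is unique. -/
open Complex Finset Matrix

lemma nEval_eq_of_sub_poly {M M' : ℕ} (g : Fin M → ℂ) (g' : Fin M' → ℂ) (p : Polynomial ℂ)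
    (h : ∀ z : ℂ, z ≠ 0 → nEval g z - nEval g' z = p.eval z) :
    ∀ z : ℂ, z ≠ 0 → nEval g z = nEval g' z := by
  set K := M + M' + 1 with hK
  set q : Polynomial ℂ :=
    (∑ k : Fin M, Polynomial.C (g k) * Polynomial.X ^ (K - 1 - (k : ℕ))) -
      ∑ k : Fin M', Polynomial.C (g' k) * Polynomial.X ^ (K - 1 - (k : ℕ)) with hq
  have hterm : ∀ z : ℂ, z ≠ 0 → ∀ k : ℕ, k < K → z ^ (K - 1 - k) = z ^ K * z⁻¹ ^ (k + 1) := by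
    intro z hz k hk
    rw [inv_pow, eq_comm, mul_inv_eq_iff_eq_mul₀ (pow_ne_zero _ hz), ← pow_add]
    congr 1; omega
  have hqeval : ∀ z : ℂ, z ≠ 0 → q.eval z = z ^ K * p.eval z := by
    intro z hz
    rw [← h z hz]
    simp only [hq, Polynomial.eval_sub, Polynomial.eval_finset_sum, Polynomial.eval_mul,
      Polynomial.eval_C, Polynomial.eval_pow, Polynomial.eval_X, nEval, mul_sub,
      Finset.mul_sum]
    congr 1
    · exact Finset.sum_congr rfl fun k _ => by
        rw [hterm z hz k (by omega)]; ring
    · exact Finset.sum_congr rfl fun k _ => by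
        rw [hterm z hz k (by omega)]; ring
  have hqp : q = Polynomial.X ^ K * p := by
    apply Polynomial.eq_of_infinite_eval_eq
    refine Set.Infinite.mono ?_ ((Set.finite_singleton (0 : ℂ)).infinite_compl)
    intro z hz
    have hz' : z ≠ 0 := hz
    simp only [Set.mem_setOf_eq, Polynomial.eval_mul, Polynomial.eval_pow, Polynomial.eval_X]
    exact hqeval z hz'
  have hp0 : p = 0 := by
    by_contra hp
    have hdq : q.natDegree ≤ K - 1 := by
      refine le_trans (Polynomial.natDegree_sub_le _ _) ?_
      refine max_le ?_ ?_ <;>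
        exact Polynomial.natDegree_sum_le_of_forall_le _ _ fun k _ =>
          le_trans (Polynomial.natDegree_C_mul_X_pow_le _ _) (by omega)
    have hdq' : q.natDegree = K + p.natDegree := by
      rw [hqp, Polynomial.natDegree_mul (pow_ne_zero _ Polynomial.X_ne_zero) hp,
        Polynomial.natDegree_X_pow]
    omega
  intro z hz
  have := h z hz
  rw [hp0, Polynomial.eval_zero] at this
  exact sub_eq_zero.mp this

lemma key_part {N : ℕ} (a b : Fin (N + 1) → ℂ) (α₀ β₀ : Polynomial ℂ)
    (hbezout : ∀ z : ℂ, pEval a z * α₀.eval z + pEval b z * β₀.eval z = 1)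
    (M : ℕ) (g : Fin M → ℂ)
    (h1 : IsPolyFun (fun z => nEval g z * pEval a z - pTilde b z))
    (h2 : IsPolyFun (fun z => nEval g z * pEval b z + pTilde a z)) :
    IsPolyFun (fun z =>
      (α₀.eval z * pTilde b z - β₀.eval z * pTilde a z) - nEval g z) := by
  obtain ⟨p₁, hp₁⟩ := h1
  obtain ⟨p₂, hp₂⟩ := h2
  refine ⟨-(α₀ * p₁) - β₀ * p₂, fun z hz => ?_⟩
  have e1 := hp₁ z hz
  have e2 := hp₂ z hz
  have e3 := hbezout z
  simp only [Polynomial.eval_sub, Polynomial.eval_neg, Polynomial.eval_mul] at *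
  linear_combination (-(α₀.eval z)) * e1 + (-(β₀.eval z)) * e2 + nEval g z * e3

/-- Uniqueness of `φ` in Theorem 2, via a Bézout relation `α α₀ + β β₀ = 1`: any
`φ ∈ P⁻` making `φα - β̃` and `φβ + α̃` have only nonnegative powers equals the
negative-power part of `α₀ β̃ - β₀ α̃`; in particular, such `φ` is unique. -/
theorem daubechies_phi_unique (N : ℕ) (a b : Fin (N + 1) → ℂ)
    (hunit : ∀ z : ℂ, z ≠ 0 →
      pEval a z * pTilde a z + pEval b z * pTilde b z = 1)
    (α₀ β₀ : Polynomial ℂ)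
    (hbezout : ∀ z : ℂ, pEval a z * α₀.eval z + pEval b z * β₀.eval z = 1)
    (M : ℕ) (g : Fin M → ℂ)
    (h1 : IsPolyFun (fun z => nEval g z * pEval a z - pTilde b z))
    (h2 : IsPolyFun (fun z => nEval g z * pEval b z + pTilde a z)) :
    IsPolyFun (fun z =>
      (α₀.eval z * pTilde b z - β₀.eval z * pTilde a z) - nEval g z) ∧
    ∀ (M' : ℕ) (g' : Fin M' → ℂ),
      IsPolyFun (fun z => nEval g' z * pEval a z - pTilde b z) →
      IsPolyFun (fun z => nEval g' z * pEval b z + pTilde a z) →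
      ∀ z : ℂ, z ≠ 0 → nEval g' z = nEval g z := by
  refine ⟨key_part a b α₀ β₀ hbezout M g h1 h2, ?_⟩
  intro M' g' h1' h2'
  obtain ⟨p, hp⟩ := key_part a b α₀ β₀ hbezout M g h1 h2
  obtain ⟨p', hp'⟩ := key_part a b α₀ β₀ hbezout M' g' h1' h2'
  refine nEval_eq_of_sub_poly g' g (p - p') fun z hz => ?_
  rw [Polynomial.eval_sub]
  have A := hp z hz
  have B := hp' z hz
  linear_combination A - B
end

section
/- If H₁ and H₂ are Haar wavelet matrices of rank m (complex m×m matrices with H H* = mI_m and row sums mδ_{i0}), then H₁ = diag(1, U) · H₂ for some unitary (m-1)×(m-1) matrix U. -/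
open Complex Finset Matrix

/-- Any two Haar wavelet matrices of rank `m = n + 1` differ by left multiplication by a
block-diagonal matrix `diag(1, U)` with `U` unitary of size `(m-1) × (m-1)`. -/
theorem haar_matrices_related_by_unitary (n : ℕ)
    (H₁ H₂ : Matrix (Fin (n + 1)) (Fin (n + 1)) ℂ)
    (hquad₁ : H₁ * H₁ᴴ = ((n + 1 : ℕ) : ℂ) • (1 : Matrix (Fin (n + 1)) (Fin (n + 1)) ℂ))
    (hlin₁ : ∀ i : Fin (n + 1), ∑ j : Fin (n + 1), H₁ i j =
      if i = 0 then ((n + 1 : ℕ) : ℂ) else 0)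
    (hquad₂ : H₂ * H₂ᴴ = ((n + 1 : ℕ) : ℂ) • (1 : Matrix (Fin (n + 1)) (Fin (n + 1)) ℂ))
    (hlin₂ : ∀ i : Fin (n + 1), ∑ j : Fin (n + 1), H₂ i j =
      if i = 0 then ((n + 1 : ℕ) : ℂ) else 0) :
    ∃ U : Matrix (Fin n) (Fin n) ℂ, U ∈ Matrix.unitaryGroup (Fin n) ℂ ∧
      H₁ = (Matrix.of fun i j : Fin (n + 1) =>
        if hi : i = 0 then (if j = 0 then (1 : ℂ) else 0)
        else if hj : j = 0 then 0 else U (i.pred hi) (j.pred hj)) * H₂ := by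
  set c : ℂ := ((n + 1 : ℕ) : ℂ) with hc
  have hc0 : c ≠ 0 := by
    rw [hc]
    exact Nat.cast_ne_zero.mpr (Nat.succ_ne_zero n)
  set W : Matrix (Fin (n + 1)) (Fin (n + 1)) ℂ := c⁻¹ • (H₁ * H₂ᴴ) with hW
  -- star-transpose identity for H₂
  have h2 : H₂ᴴ * H₂ = c • 1 := by
    have h1 : H₂ * (c⁻¹ • H₂ᴴ) = 1 := by
      rw [Matrix.mul_smul, hquad₂, smul_smul, inv_mul_cancel₀ hc0, one_smul]
    have h1' := mul_eq_one_comm.mp h1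
    calc H₂ᴴ * H₂ = c • ((c⁻¹ • H₂ᴴ) * H₂) := by
          rw [Matrix.smul_mul, smul_smul, mul_inv_cancel₀ hc0, one_smul]
      _ = c • 1 := by rw [h1']
  have hWH : W * H₂ = H₁ := by
    rw [hW, Matrix.smul_mul, Matrix.mul_assoc, h2, Matrix.mul_smul, Matrix.mul_one,
      smul_smul, inv_mul_cancel₀ hc0, one_smul]
  have hWct : Wᴴ = c⁻¹ • (H₂ * H₁ᴴ) := by
    rw [hW, Matrix.conjTranspose_smul, Matrix.conjTranspose_mul,
      Matrix.conjTranspose_conjTranspose]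
    congr 1
    simp [hc]
  have hWU : W * Wᴴ = 1 := by
    have key : H₂ᴴ * (H₂ * H₁ᴴ) = c • H₁ᴴ := by
      rw [← Matrix.mul_assoc, h2, Matrix.smul_mul, Matrix.one_mul]
    rw [hW, hWct, Matrix.smul_mul, Matrix.mul_smul, Matrix.mul_assoc, key,
      Matrix.mul_smul, hquad₁]
    rw [smul_smul, smul_smul, smul_smul]
    rw [show c⁻¹ * c⁻¹ * c * c = 1 by field_simp]
    rw [one_smul]
  -- first column of W is e₀
  have hcol : ∀ i : Fin (n + 1), W i 0 = if i = 0 then 1 else 0 := by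
    intro i
    have h1 : ∑ j, (W * H₂) i j = ∑ j, H₁ i j := by rw [hWH]
    have h2' : ∑ j, (W * H₂) i j = c * W i 0 := by
      simp only [Matrix.mul_apply]
      rw [Finset.sum_comm]
      have : ∀ k : Fin (n + 1), ∑ j, W i k * H₂ k j = W i k * (if k = 0 then c else 0) := by
        intro k
        rw [← Finset.mul_sum, hlin₂ k]
      rw [Finset.sum_congr rfl (fun k _ => this k)]
      simp [mul_ite, mul_comm]
    rw [h2', hlin₁ i] at h1
    by_cases hi : i = 0
    · simp only [hi, if_pos rfl] at h1 ⊢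
      field_simp at h1
      rw [if_pos trivial] at h1 ⊢
      exact mul_left_cancel₀ hc0 (h1.trans (mul_one c).symm)
    · simp only [hi, if_neg hi] at h1 ⊢
      rcases mul_eq_zero.mp h1 with h | h
      · exact absurd h hc0
      · exact h
  -- first row of W is e₀
  have hrow : ∀ j : Fin (n + 1), W 0 j = if j = 0 then 1 else 0 := by
    have hdiag : ∑ k, Complex.normSq (W 0 k) = 1 := by
      have h00 := congrFun (congrFun hWU 0) 0
      simp only [Matrix.mul_apply, Matrix.conjTranspose_apply, Matrix.one_apply_eq] at h00
      have : ∑ k, (W 0 k) * star (W 0 k) = ∑ k, ((Complex.normSq (W 0 k) : ℝ) : ℂ) := by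
        apply Finset.sum_congr rfl
        intro k _
        rw [← Complex.mul_conj]
        rfl
      rw [this] at h00
      have h00' : ((∑ k, Complex.normSq (W 0 k) : ℝ) : ℂ) = ((1 : ℝ) : ℂ) := by
        push_cast
        simpa using h00
      exact_mod_cast h00'
    have hW00 : W 0 0 = 1 := by simpa using hcol 0
    have hsum0 : ∑ k : Fin n, Complex.normSq (W 0 k.succ) = 0 := by
      rw [Fin.sum_univ_succ, hW00] at hdiag
      simp at hdiag
      linarith
    have hzero : ∀ k : Fin n, W 0 k.succ = 0 := by
      intro k
      have := (Finset.sum_eq_zero_iff_of_nonneg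
        (fun k _ => Complex.normSq_nonneg (W 0 k.succ))).mp hsum0 k (Finset.mem_univ k)
      exact Complex.normSq_eq_zero.mp this
    intro j
    by_cases hj : j = 0
    · simp [hj, hW00]
    · rw [if_neg hj, ← Fin.succ_pred j hj]
      exact hzero (j.pred hj)
  refine ⟨W.submatrix Fin.succ Fin.succ, ?_, ?_⟩
  · rw [Matrix.mem_unitaryGroup_iff]
    ext i j
    have h := congrFun (congrFun hWU i.succ) j.succ
    simp only [Matrix.mul_apply, Matrix.conjTranspose_apply, Matrix.one_apply] at h ⊢
    rw [Fin.sum_univ_succ] at h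
    have hi0 : W i.succ 0 = 0 := by
      rw [hcol i.succ, if_neg (Fin.succ_ne_zero i)]
    rw [hi0, zero_mul, zero_add] at h
    simp only [Matrix.star_eq_conjTranspose, Matrix.conjTranspose_apply,
      Matrix.submatrix_apply]
    rw [h]
    simp [Fin.succ_inj]
  · rw [← hWH]
    congr 1
    ext i j
    simp only [Matrix.of_apply]
    by_cases hi : i = 0
    · subst hi
      rw [dif_pos rfl, hrow j]
    · rw [dif_neg hi]
      by_cases hj : j = 0
      · rw [dif_pos hj, hj, hcol i, if_neg hi]
      · rw [dif_neg hj]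
        simp [Fin.succ_pred]
end

section
/- Let φ ∈ P^-_N be nonzero and let Θ be the associated (N+1)×(N+1) Hankel matrix and X the solution of (Θ̄Θ + I)X = e₁, Y = Θ̄X̄, giving α(z) = Σ x_k z^k, β(z) = Σ y_k z^k. Then α(z)Φ₂(z) - β(z)Φ₁(z) = c for all z ∈ ℂ\{0}, where Φ₁ = φα - β̃, Φ₂ = φβ + α̃, and c = αα̃ + ββ̃ is the (positive) constant value; in particular the determinant of [[1,0],[φ,1]]·[[α,β],[-β̃,α̃]] equals c everywhere. -/
open Complex Finset Matrix

theorem tri_sum (n : ℕ) (f : ℕ → ℕ → ℂ) :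
    ∑ p ∈ (Finset.range n ×ˢ Finset.range n).filter (fun p => p.2 < p.1), f p.1 p.2
      = ∑ m ∈ Finset.Icc 1 n, ∑ l ∈ Finset.range (n - m), f (l + m) l := by
  rw [Finset.sum_sigma']
  refine Finset.sum_nbij' (fun p => ⟨p.1 - p.2, p.2⟩) (fun q => (q.2 + q.1, q.2)) ?_ ?_ ?_ ?_ ?_
  · rintro ⟨a, b⟩ h
    simp only [Finset.mem_filter, Finset.mem_product, Finset.mem_range] at h
    simp only [Finset.mem_sigma, Finset.mem_Icc, Finset.mem_range]
    omega
  · rintro ⟨m, l⟩ h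
    simp only [Finset.mem_sigma, Finset.mem_Icc, Finset.mem_range] at h
    simp only [Finset.mem_filter, Finset.mem_product, Finset.mem_range]
    omega
  · rintro ⟨a, b⟩ h
    simp only [Finset.mem_filter, Finset.mem_product, Finset.mem_range] at h
    dsimp only
    have : b + (a - b) = a := by omega
    rw [this]
  · rintro ⟨m, l⟩ h
    simp only [Finset.mem_sigma, Finset.mem_Icc, Finset.mem_range] at h
    dsimp only
    have : l + m - l = m := by omega
    rw [this]
  · rintro ⟨a, b⟩ h
    simp only [Finset.mem_filter, Finset.mem_product, Finset.mem_range] at h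
    dsimp only
    congr 1
    omega

theorem tri_sum' (n : ℕ) (f : ℕ → ℕ → ℂ) :
    ∑ p ∈ (Finset.range n ×ˢ Finset.range n).filter (fun p => p.1 < p.2), f p.1 p.2
      = ∑ m ∈ Finset.Icc 1 n, ∑ l ∈ Finset.range (n - m), f l (l + m) := by
  rw [← tri_sum n (fun k l => f l k)]
  refine Finset.sum_nbij' Prod.swap Prod.swap ?_ ?_ ?_ ?_ ?_ <;>
    rintro ⟨a, b⟩ h <;>
    simp_all [Finset.mem_filter, Finset.mem_product, Finset.mem_range, And.comm]

theorem diag_sum (n : ℕ) (f : ℕ → ℕ → ℂ) :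
    ∑ p ∈ (Finset.range n ×ˢ Finset.range n).filter (fun p => p.1 = p.2), f p.1 p.2
      = ∑ k ∈ Finset.range n, f k k := by
  refine Finset.sum_nbij' (fun p => p.1) (fun k => (k, k)) ?_ ?_ ?_ ?_ ?_
  · rintro ⟨a, b⟩ h
    simp only [Finset.mem_filter, Finset.mem_product, Finset.mem_range] at h
    dsimp only
    simp only [Finset.mem_range]
    omega
  · intro a h
    simp only [Finset.mem_range] at h
    simp [Finset.mem_filter, Finset.mem_product, Finset.mem_range, h]
  · rintro ⟨a, b⟩ h
    simp only [Finset.mem_filter, Finset.mem_product, Finset.mem_range] at h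
    dsimp only
    congr 1
    omega
  · intro a h
    dsimp only
  · rintro ⟨a, b⟩ h
    simp only [Finset.mem_filter, Finset.mem_product, Finset.mem_range] at h
    dsimp only
    congr 1
    omega

theorem sum_decomp (n : ℕ) (f : ℕ → ℕ → ℂ) :
    ∑ k ∈ Finset.range n, ∑ l ∈ Finset.range n, f k l =
      (∑ k ∈ Finset.range n, f k k)
      + (∑ m ∈ Finset.Icc 1 n, ∑ l ∈ Finset.range (n - m), f (l + m) l)
      + (∑ m ∈ Finset.Icc 1 n, ∑ l ∈ Finset.range (n - m), f l (l + m)) := by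
  rw [← Finset.sum_product', ← tri_sum n f, ← tri_sum' n f, ← diag_sum n f]
  have hsplit : ∀ p ∈ Finset.range n ×ˢ Finset.range n,
      f p.1 p.2 = (if p.1 = p.2 then f p.1 p.2 else 0)
        + (if p.2 < p.1 then f p.1 p.2 else 0) + (if p.1 < p.2 then f p.1 p.2 else 0) := by
    intro p _
    split_ifs <;> first | omega | ring
  rw [Finset.sum_congr rfl hsplit, Finset.sum_add_distrib, Finset.sum_add_distrib,
      Finset.sum_filter, Finset.sum_filter, Finset.sum_filter]

/-- With `α, β` constructed from the Hankel system for a nonzero `φ ∈ P⁻_N`, one has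
`α Φ₂ - β Φ₁ = c` on `ℂ \ {0}` where `Φ₁ = φα - β̃`, `Φ₂ = φβ + α̃` and
`c = α α̃ + β β̃ > 0`; in particular the determinant of
`[[1,0],[φ,1]]·[[α,β],[-β̃,α̃]]` equals `c` everywhere on `ℂ \ {0}`. -/
theorem daubechies_determinant_constant (N : ℕ) (hN : 1 ≤ N) (γ : ℕ → ℂ)
    (hγ0 : γ 0 = 0) (hγtop : ∀ k : ℕ, N < k → γ k = 0)
    (hγ : ∃ k, 1 ≤ k ∧ k ≤ N ∧ γ k ≠ 0)
    (Θ : Matrix (Fin (N + 1)) (Fin (N + 1)) ℂ)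
    (hΘ : ∀ i j : Fin (N + 1), Θ i j = γ ((i : ℕ) + (j : ℕ)))
    (X Y : Fin (N + 1) → ℂ)
    (hX : (Θ.map (starRingEnd ℂ) * Θ + 1).mulVec X =
      fun i => if i = 0 then (1 : ℂ) else 0)
    (hY : Y = (Θ.map (starRingEnd ℂ)).mulVec (fun i => (starRingEnd ℂ) (X i)))
    (φ : ℂ → ℂ) (hφ : ∀ z : ℂ, φ z = ∑ k ∈ Finset.Icc 1 N, γ k * z⁻¹ ^ k) :
    ∃ c : ℝ, 0 < c ∧ ∀ z : ℂ, z ≠ 0 →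
      pEval X z * pTilde X z + pEval Y z * pTilde Y z = (c : ℂ) ∧
      pEval X z * (φ z * pEval Y z + pTilde X z) -
        pEval Y z * (φ z * pEval X z - pTilde Y z) = (c : ℂ) ∧
      ((!![(1 : ℂ), 0; φ z, 1] : Matrix (Fin 2) (Fin 2) ℂ) *
        !![pEval X z, pEval Y z; -pTilde Y z, pTilde X z]).det = (c : ℂ) := by
  classical
  set x : ℕ → ℂ := fun k => if h : k < N + 1 then X ⟨k, h⟩ else 0 with hxdef
  set y : ℕ → ℂ := fun k => if h : k < N + 1 then Y ⟨k, h⟩ else 0 with hydef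
  have hx' : ∀ i : Fin (N + 1), x i = X i := by
    intro i
    have hi : (i : ℕ) < N + 1 := i.isLt
    simp [hxdef, hi]
    intro h; exact absurd h (by omega)
  have hy' : ∀ i : Fin (N + 1), y i = Y i := by
    intro i
    have hi : (i : ℕ) < N + 1 := i.isLt
    simp [hydef, hi]
    intro h; exact absurd h (by omega)
  set u : ℕ → ℂ := fun i => ∑ j ∈ Finset.range (N + 1), γ (i + j) * x j with hudef
  have hutop : ∀ i, N < i → u i = 0 := by
    intro i hi
    rw [hudef]
    refine Finset.sum_eq_zero fun j _ => ?_
    rw [hγtop _ (by omega), zero_mul]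
  have hΘX : ∀ i : Fin (N + 1), Θ.mulVec X i = u i := by
    intro i
    rw [hudef]
    dsimp only
    rw [← Fin.sum_univ_eq_sum_range (fun j => γ (↑i + j) * x j) (N + 1)]
    simp only [Matrix.mulVec, dotProduct]
    exact Finset.sum_congr rfl fun j _ => by rw [hΘ, hx']
  have hu' : Θ.mulVec X = fun j : Fin (N + 1) => u ↑j := funext hΘX
  have hsys : ∀ i : ℕ, i < N + 1 →
      (∑ j ∈ Finset.range (N + 1), (starRingEnd ℂ) (γ (i + j)) * u j) + x i
        = (if i = 0 then 1 else 0) := by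
    intro i hi
    have h1 := congrFun hX ⟨i, hi⟩
    rw [Matrix.add_mulVec, Matrix.one_mulVec, ← Matrix.mulVec_mulVec, hu'] at h1
    have h2 : (Θ.map (starRingEnd ℂ)).mulVec (fun j : Fin (N + 1) => u ↑j) ⟨i, hi⟩
        = ∑ j ∈ Finset.range (N + 1), (starRingEnd ℂ) (γ (i + j)) * u j := by
      rw [← Fin.sum_univ_eq_sum_range (fun j => (starRingEnd ℂ) (γ (i + j)) * u j) (N + 1)]
      simp only [Matrix.mulVec, dotProduct, Matrix.map_apply]
      exact Finset.sum_congr rfl fun j _ => by rw [hΘ]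
    have h3 : X ⟨i, hi⟩ = x i := (hx' ⟨i, hi⟩).symm
    have h4 : ((⟨i, hi⟩ : Fin (N + 1)) = 0) ↔ i = 0 := by
      simp [Fin.ext_iff]
    simp only [Pi.add_apply, h2, h3] at h1
    rw [h1]
    simp [h4]
  have hyu : ∀ i : ℕ, y i = (starRingEnd ℂ) (u i) := by
    intro i
    by_cases hi : i < N + 1
    · have h1 := congrFun hY ⟨i, hi⟩
      have h2 : (Θ.map (starRingEnd ℂ)).mulVec (fun j => (starRingEnd ℂ) (X j)) ⟨i, hi⟩
          = (starRingEnd ℂ) (Θ.mulVec X ⟨i, hi⟩) := by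
        simp only [Matrix.mulVec, dotProduct, Matrix.map_apply, map_sum]
        exact Finset.sum_congr rfl fun j _ => ((starRingEnd ℂ).map_mul _ _).symm
      rw [h2, hΘX ⟨i, hi⟩] at h1
      rw [← hy' ⟨i, hi⟩] at h1
      exact h1
    · have hNi : N < i := by omega
      rw [hydef]
      dsimp only
      rw [dif_neg hi, hutop i hNi, map_zero]
  -- key cancellation
  have Skey : ∀ m : ℕ, 1 ≤ m →
      ∑ l ∈ Finset.range (N + 1 - m),
        (x (l + m) * (starRingEnd ℂ) (x l) + y (l + m) * (starRingEnd ℂ) (y l)) = 0 := by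
    intro m hm
    set xs : ℕ → ℂ := fun j => if m ≤ j then x (j - m) else 0 with hxs
    have hshift : ∀ l : ℕ, u (l + m) = ∑ j ∈ Finset.range (N + 1), γ (l + j) * xs j := by
      intro l
      have h1 : u (l + m) = ∑ i ∈ Finset.range (N + 1 - m), γ (l + m + i) * x i := by
        rw [hudef]
        dsimp only
        refine (Finset.sum_subset (Finset.range_subset_range.2 (by omega)) ?_).symm
        intro j _ hj2
        simp only [Finset.mem_range] at hj2
        rw [hγtop _ (by omega), zero_mul]
      have h2 : ∑ j ∈ Finset.range (N + 1), γ (l + j) * xs j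
          = ∑ i ∈ Finset.range (N + 1 - m), γ (l + m + i) * x i := by
        calc ∑ j ∈ Finset.range (N + 1), γ (l + j) * xs j
            = ∑ j ∈ Finset.Ico m (N + 1), γ (l + j) * xs j := by
              rw [Finset.range_eq_Ico]
              refine (Finset.sum_subset (Finset.Ico_subset_Ico (Nat.zero_le m) le_rfl) ?_).symm
              intro j hj hj2
              simp only [Finset.mem_Ico] at hj hj2
              rw [hxs]
              dsimp only
              rw [if_neg (by omega), mul_zero]
          _ = ∑ i ∈ Finset.range (N + 1 - m), γ (l + (m + i)) * xs (m + i) :=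
              Finset.sum_Ico_eq_sum_range _ _ _
          _ = ∑ i ∈ Finset.range (N + 1 - m), γ (l + m + i) * x i := by
              refine Finset.sum_congr rfl fun i _ => ?_
              rw [hxs]
              dsimp only
              rw [if_pos (by omega)]
              have e1 : l + (m + i) = l + m + i := by omega
              have e2 : m + i - m = i := by omega
              rw [e1, e2]
      rw [h1, h2]
    have part2 :
        ∑ l ∈ Finset.range (N + 1 - m), y (l + m) * (starRingEnd ℂ) (y l)
          = - ∑ l ∈ Finset.range (N + 1 - m), (starRingEnd ℂ) (x l) * x (l + m) := by
      have e1 : ∑ l ∈ Finset.range (N + 1 - m), y (l + m) * (starRingEnd ℂ) (y l)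
          = ∑ l ∈ Finset.range (N + 1), (starRingEnd ℂ) (u (l + m)) * u l := by
        calc ∑ l ∈ Finset.range (N + 1 - m), y (l + m) * (starRingEnd ℂ) (y l)
            = ∑ l ∈ Finset.range (N + 1 - m), (starRingEnd ℂ) (u (l + m)) * u l := by
              refine Finset.sum_congr rfl fun l _ => ?_
              rw [hyu (l + m), hyu l, Complex.conj_conj]
          _ = ∑ l ∈ Finset.range (N + 1), (starRingEnd ℂ) (u (l + m)) * u l := by
              refine Finset.sum_subset (Finset.range_subset_range.2 (by omega)) ?_
              intro l _ hl2
              simp only [Finset.mem_range] at hl2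
              rw [hutop (l + m) (by omega), map_zero, zero_mul]
      have e2 : ∑ l ∈ Finset.range (N + 1), (starRingEnd ℂ) (u (l + m)) * u l
          = ∑ j ∈ Finset.range (N + 1),
              (starRingEnd ℂ) (xs j) * ((if j = 0 then 1 else 0) - x j) := by
        calc ∑ l ∈ Finset.range (N + 1), (starRingEnd ℂ) (u (l + m)) * u l
            = ∑ l ∈ Finset.range (N + 1), ∑ j ∈ Finset.range (N + 1),
                (starRingEnd ℂ) (xs j) * ((starRingEnd ℂ) (γ (j + l)) * u l) := by
              refine Finset.sum_congr rfl fun l _ => ?_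
              rw [hshift l, map_sum, Finset.sum_mul]
              refine Finset.sum_congr rfl fun j _ => ?_
              rw [(starRingEnd ℂ).map_mul]
              have e : l + j = j + l := by omega
              rw [e]
              ring
          _ = ∑ j ∈ Finset.range (N + 1),
                (starRingEnd ℂ) (xs j) * (∑ l ∈ Finset.range (N + 1),
                  (starRingEnd ℂ) (γ (j + l)) * u l) := by
              rw [Finset.sum_comm]
              exact Finset.sum_congr rfl fun j _ => (Finset.mul_sum _ _ _).symm
          _ = ∑ j ∈ Finset.range (N + 1),
                (starRingEnd ℂ) (xs j) * ((if j = 0 then 1 else 0) - x j) := by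
              refine Finset.sum_congr rfl fun j hj => ?_
              rw [eq_sub_of_add_eq (hsys j (Finset.mem_range.1 hj))]
      have e3 : ∑ j ∈ Finset.range (N + 1),
            (starRingEnd ℂ) (xs j) * ((if j = 0 then 1 else 0) - x j)
          = - ∑ j ∈ Finset.range (N + 1), (starRingEnd ℂ) (xs j) * x j := by
        have hsp : ∀ j ∈ Finset.range (N + 1),
            (starRingEnd ℂ) (xs j) * ((if j = 0 then 1 else 0) - x j)
              = (if j = 0 then (starRingEnd ℂ) (xs j) else 0)
                - (starRingEnd ℂ) (xs j) * x j := by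
          intro j _
          split_ifs <;> ring
        rw [Finset.sum_congr rfl hsp, Finset.sum_sub_distrib,
          Finset.sum_ite_eq' (Finset.range (N + 1)) 0 (fun j => (starRingEnd ℂ) (xs j)),
          if_pos (Finset.mem_range.2 (by omega))]
        rw [hxs]
        dsimp only
        rw [if_neg (by omega), map_zero, zero_sub]
      have e4 : ∑ j ∈ Finset.range (N + 1), (starRingEnd ℂ) (xs j) * x j
          = ∑ l ∈ Finset.range (N + 1 - m), (starRingEnd ℂ) (x l) * x (l + m) := by
        calc ∑ j ∈ Finset.range (N + 1), (starRingEnd ℂ) (xs j) * x j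
            = ∑ j ∈ Finset.Ico m (N + 1), (starRingEnd ℂ) (xs j) * x j := by
              rw [Finset.range_eq_Ico]
              refine (Finset.sum_subset (Finset.Ico_subset_Ico (Nat.zero_le m) le_rfl) ?_).symm
              intro j hj hj2
              simp only [Finset.mem_Ico] at hj hj2
              rw [hxs]
              dsimp only
              rw [if_neg (by omega), map_zero, zero_mul]
          _ = ∑ i ∈ Finset.range (N + 1 - m), (starRingEnd ℂ) (xs (m + i)) * x (m + i) :=
              Finset.sum_Ico_eq_sum_range _ _ _
          _ = ∑ l ∈ Finset.range (N + 1 - m), (starRingEnd ℂ) (x l) * x (l + m) := by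
              refine Finset.sum_congr rfl fun i _ => ?_
              rw [hxs]
              dsimp only
              rw [if_pos (by omega)]
              have e : m + i - m = i := by omega
              have e' : m + i = i + m := by omega
              rw [e, e']
      rw [e1, e2, e3, e4]
    rw [Finset.sum_add_distrib, part2]
    have hc : ∑ l ∈ Finset.range (N + 1 - m), x (l + m) * (starRingEnd ℂ) (x l)
        = ∑ l ∈ Finset.range (N + 1 - m), (starRingEnd ℂ) (x l) * x (l + m) :=
      Finset.sum_congr rfl fun l _ => mul_comm _ _
    rw [hc]
    ring
  -- the constant
  have hXne : ∃ k : Fin (N + 1), X k ≠ 0 := by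
    by_contra hcon
    push_neg at hcon
    have hX0 : X = 0 := funext hcon
    rw [hX0, Matrix.mulVec_zero] at hX
    have h0 := congrFun hX 0
    simp at h0
  obtain ⟨k₀, hk₀⟩ := hXne
  refine ⟨∑ k ∈ Finset.range (N + 1), (Complex.normSq (x k) + Complex.normSq (y k)), ?_, ?_⟩
  · refine Finset.sum_pos' (fun k _ => add_nonneg (Complex.normSq_nonneg _) (Complex.normSq_nonneg _)) ⟨(k₀ : ℕ), Finset.mem_range.2 k₀.isLt, ?_⟩
    have hx0 : x (k₀ : ℕ) = X k₀ := hx' k₀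
    have h1 : 0 < Complex.normSq (x (k₀ : ℕ)) := by
      rw [hx0]
      exact Complex.normSq_pos.2 hk₀
    have h2 : 0 ≤ Complex.normSq (y (k₀ : ℕ)) := Complex.normSq_nonneg _
    linarith
  · intro z hz
    have hzz : z * z⁻¹ = 1 := mul_inv_cancel₀ hz
    have hpX : pEval X z = ∑ k ∈ Finset.range (N + 1), x k * z ^ k := by
      rw [pEval, ← Fin.sum_univ_eq_sum_range (fun k => x k * z ^ k) (N + 1)]
      exact Finset.sum_congr rfl fun i _ => by rw [hx']
    have hpY : pEval Y z = ∑ k ∈ Finset.range (N + 1), y k * z ^ k := by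
      rw [pEval, ← Fin.sum_univ_eq_sum_range (fun k => y k * z ^ k) (N + 1)]
      exact Finset.sum_congr rfl fun i _ => by rw [hy']
    have hptX : pTilde X z = ∑ k ∈ Finset.range (N + 1), (starRingEnd ℂ) (x k) * z⁻¹ ^ k := by
      rw [pTilde, ← Fin.sum_univ_eq_sum_range (fun k => (starRingEnd ℂ) (x k) * z⁻¹ ^ k) (N + 1)]
      exact Finset.sum_congr rfl fun i _ => by rw [hx']
    have hptY : pTilde Y z = ∑ k ∈ Finset.range (N + 1), (starRingEnd ℂ) (y k) * z⁻¹ ^ k := by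
      rw [pTilde, ← Fin.sum_univ_eq_sum_range (fun k => (starRingEnd ℂ) (y k) * z⁻¹ ^ k) (N + 1)]
      exact Finset.sum_congr rfl fun i _ => by rw [hy']
    have key : pEval X z * pTilde X z + pEval Y z * pTilde Y z
        = ((∑ k ∈ Finset.range (N + 1),
            (Complex.normSq (x k) + Complex.normSq (y k)) : ℝ) : ℂ) := by
      rw [hpX, hptX, hpY, hptY, Finset.sum_mul_sum, Finset.sum_mul_sum,
        ← Finset.sum_add_distrib]
      have hcomb : ∀ k ∈ Finset.range (N + 1),
          ((∑ l ∈ Finset.range (N + 1), (x k * z ^ k) * ((starRingEnd ℂ) (x l) * z⁻¹ ^ l))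
            + ∑ l ∈ Finset.range (N + 1), (y k * z ^ k) * ((starRingEnd ℂ) (y l) * z⁻¹ ^ l))
          = ∑ l ∈ Finset.range (N + 1),
              ((x k * (starRingEnd ℂ) (x l) + y k * (starRingEnd ℂ) (y l))
                * (z ^ k * z⁻¹ ^ l)) := by
        intro k _
        rw [← Finset.sum_add_distrib]
        exact Finset.sum_congr rfl fun l _ => by ring
      rw [Finset.sum_congr rfl hcomb,
        sum_decomp (N + 1) (fun k l =>
          (x k * (starRingEnd ℂ) (x l) + y k * (starRingEnd ℂ) (y l)) * (z ^ k * z⁻¹ ^ l))]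
      have hdiag : ∑ k ∈ Finset.range (N + 1),
          (x k * (starRingEnd ℂ) (x k) + y k * (starRingEnd ℂ) (y k)) * (z ^ k * z⁻¹ ^ k)
          = ((∑ k ∈ Finset.range (N + 1),
              (Complex.normSq (x k) + Complex.normSq (y k)) : ℝ) : ℂ) := by
        push_cast
        refine Finset.sum_congr rfl fun k _ => ?_
        rw [← mul_pow, hzz, one_pow, mul_one, Complex.mul_conj, Complex.mul_conj]
      have hupper : ∑ m ∈ Finset.Icc 1 (N + 1), ∑ l ∈ Finset.range (N + 1 - m),
          (x (l + m) * (starRingEnd ℂ) (x l) + y (l + m) * (starRingEnd ℂ) (y l))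
            * (z ^ (l + m) * z⁻¹ ^ l) = 0 := by
        refine Finset.sum_eq_zero fun m hm => ?_
        have hm1 : 1 ≤ m := (Finset.mem_Icc.1 hm).1
        have hz1 : ∀ l ∈ Finset.range (N + 1 - m),
            (x (l + m) * (starRingEnd ℂ) (x l) + y (l + m) * (starRingEnd ℂ) (y l))
              * (z ^ (l + m) * z⁻¹ ^ l)
            = (x (l + m) * (starRingEnd ℂ) (x l) + y (l + m) * (starRingEnd ℂ) (y l))
              * z ^ m := by
          intro l _
          have hp : z ^ (l + m) * z⁻¹ ^ l = z ^ m := by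
            rw [pow_add, mul_comm (z ^ l) (z ^ m), mul_assoc, ← mul_pow, hzz, one_pow, mul_one]
          rw [hp]
        rw [Finset.sum_congr rfl hz1, ← Finset.sum_mul, Skey m hm1, zero_mul]
      have hlower : ∑ m ∈ Finset.Icc 1 (N + 1), ∑ l ∈ Finset.range (N + 1 - m),
          (x l * (starRingEnd ℂ) (x (l + m)) + y l * (starRingEnd ℂ) (y (l + m)))
            * (z ^ l * z⁻¹ ^ (l + m)) = 0 := by
        refine Finset.sum_eq_zero fun m hm => ?_
        have hm1 : 1 ≤ m := (Finset.mem_Icc.1 hm).1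
        have hz1 : ∀ l ∈ Finset.range (N + 1 - m),
            (x l * (starRingEnd ℂ) (x (l + m)) + y l * (starRingEnd ℂ) (y (l + m)))
              * (z ^ l * z⁻¹ ^ (l + m))
            = (x l * (starRingEnd ℂ) (x (l + m)) + y l * (starRingEnd ℂ) (y (l + m)))
              * z⁻¹ ^ m := by
          intro l _
          have hp : z ^ l * z⁻¹ ^ (l + m) = z⁻¹ ^ m := by
            rw [pow_add, ← mul_assoc, ← mul_pow, hzz, one_pow, one_mul]
          rw [hp]
        rw [Finset.sum_congr rfl hz1, ← Finset.sum_mul]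
        have hconj : ∑ l ∈ Finset.range (N + 1 - m),
            (x l * (starRingEnd ℂ) (x (l + m)) + y l * (starRingEnd ℂ) (y (l + m)))
            = (starRingEnd ℂ) (∑ l ∈ Finset.range (N + 1 - m),
                (x (l + m) * (starRingEnd ℂ) (x l) + y (l + m) * (starRingEnd ℂ) (y l))) := by
          rw [map_sum]
          refine Finset.sum_congr rfl fun l _ => ?_
          rw [map_add, (starRingEnd ℂ).map_mul, (starRingEnd ℂ).map_mul,
            Complex.conj_conj, Complex.conj_conj]
          ring
        rw [hconj, Skey m hm1, map_zero, zero_mul]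
      rw [hdiag, hupper, hlower, add_zero, add_zero]
    refine ⟨key, by linear_combination key, ?_⟩
    rw [Matrix.det_mul, Matrix.det_fin_two_of, Matrix.det_fin_two_of]
    linear_combination key
end
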